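/- arXiv:2103.01473 — 5 statements merged into one kernel-verified Lean document; each statement's English description precedes it below -/
import Mathlib

section
/- Suppose cos θ0 ≠ sin θ0 · sin θ1, sin θ0 · cos θ1 ≠ 0, and cos θ0 ≠ 0. Then the first moment of the open quantum walk stays bounded in time: there exists a constant C such that |E₁(t)| ≤ C for all t ∈ ℕ. -/
open Matrix Complex Filter

/-- Local operation `P(θ0,θ1)`. -/
noncomputable def Pmat (θ0 θ1 : ℝ) : Matrix (Fin 2) (Fin 2) ℂ :=
  !![0, (Real.cos θ0 : ℂ);
     ((Real.sin θ0 * Real.sin θ1 : ℝ) : ℂ), (-((Real.sin θ0 * Real.cos θ1 : ℝ) : ℂ))]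

/-- Local operation `Q(θ0,θ1)`. -/
noncomputable def Qmat (θ0 θ1 : ℝ) : Matrix (Fin 2) (Fin 2) ℂ :=
  !![((Real.sin θ0 * Real.cos θ1 : ℝ) : ℂ), ((Real.sin θ0 * Real.sin θ1 : ℝ) : ℂ);
     (Real.cos θ0 : ℂ), 0]

/-- The open quantum walk on ℤ with initial state `diagonal (p, 1-p)` at the origin. -/
noncomputable def owalk (θ0 θ1 p : ℝ) : ℕ → ℤ → Matrix (Fin 2) (Fin 2) ℂ
  | 0, x => if x = 0 then Matrix.diagonal ![(p : ℂ), ((1 - p : ℝ) : ℂ)] else 0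
  | t + 1, x =>
      Pmat θ0 θ1 * owalk θ0 θ1 p t (x + 1) * (Pmat θ0 θ1)ᴴ
        + Qmat θ0 θ1 * owalk θ0 θ1 p t (x - 1) * (Qmat θ0 θ1)ᴴ

/-- Finding probability at position `x` at time `t`. -/
noncomputable def findprob (θ0 θ1 p : ℝ) (t : ℕ) (x : ℤ) : ℝ :=
  ((owalk θ0 θ1 p t x).trace).re

/-- First moment (finite sum: the walk vanishes outside `[-t, t]`). -/
noncomputable def moment1 (θ0 θ1 p : ℝ) (t : ℕ) : ℝ :=
  ∑ x ∈ Finset.Icc (-(t : ℤ)) (t : ℤ), (x : ℝ) * findprob θ0 θ1 p t x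

/-- Second moment. -/
noncomputable def moment2 (θ0 θ1 p : ℝ) (t : ℕ) : ℝ :=
  ∑ x ∈ Finset.Icc (-(t : ℤ)) (t : ℤ), (x : ℝ) ^ 2 * findprob θ0 θ1 p t x

/-- Standard deviation. -/
noncomputable def stdDev (θ0 θ1 p : ℝ) (t : ℕ) : ℝ :=
  Real.sqrt (moment2 θ0 θ1 p t - (moment1 θ0 θ1 p t) ^ 2)


namespace OWAux

variable (θ0 θ1 p : ℝ)

lemma owalk_vanish : ∀ (t : ℕ) (x : ℤ), ((t : ℤ) < x ∨ x < -(t : ℤ)) →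
    owalk θ0 θ1 p t x = 0
  | 0, x, h => by
      have hx : x ≠ 0 := by omega
      simp [owalk, hx]
  | t + 1, x, h => by
      have h1 : ((t : ℤ) < x + 1 ∨ x + 1 < -(t : ℤ)) := by push_cast at h; omega
      have h2 : ((t : ℤ) < x - 1 ∨ x - 1 < -(t : ℤ)) := by push_cast at h; omega
      simp [owalk, owalk_vanish t _ h1, owalk_vanish t _ h2]

lemma Pconj (M : Matrix (Fin 2) (Fin 2) ℂ) :
    Pmat θ0 θ1 * M * (Pmat θ0 θ1)ᴴ =
      !![((Real.cos θ0 * Real.cos θ0 : ℝ) : ℂ) * M 1 1,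
         ((Real.cos θ0 * Real.sin θ0 * Real.sin θ1 : ℝ) : ℂ) * M 1 0
           - ((Real.cos θ0 * Real.sin θ0 * Real.cos θ1 : ℝ) : ℂ) * M 1 1;
         ((Real.cos θ0 * Real.sin θ0 * Real.sin θ1 : ℝ) : ℂ) * M 0 1
           - ((Real.cos θ0 * Real.sin θ0 * Real.cos θ1 : ℝ) : ℂ) * M 1 1,
         ((Real.sin θ0 * Real.sin θ0 * Real.sin θ1 * Real.sin θ1 : ℝ) : ℂ) * M 0 0
           - ((Real.sin θ0 * Real.sin θ0 * Real.sin θ1 * Real.cos θ1 : ℝ) : ℂ) * (M 1 0 + M 0 1)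
           + ((Real.sin θ0 * Real.sin θ0 * Real.cos θ1 * Real.cos θ1 : ℝ) : ℂ) * M 1 1] := by
  ext i j
  fin_cases i <;> fin_cases j <;>
    (simp only [Matrix.mul_apply, Matrix.conjTranspose_apply, Fin.sum_univ_two];
     simp [Pmat, Complex.star_def, Complex.conj_ofReal, -Complex.ofReal_cos, -Complex.ofReal_sin]; ring)

lemma Qconj (M : Matrix (Fin 2) (Fin 2) ℂ) :
    Qmat θ0 θ1 * M * (Qmat θ0 θ1)ᴴ =
      !![((Real.sin θ0 * Real.sin θ0 * Real.cos θ1 * Real.cos θ1 : ℝ) : ℂ) * M 0 0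
           + ((Real.sin θ0 * Real.sin θ0 * Real.sin θ1 * Real.cos θ1 : ℝ) : ℂ) * (M 1 0 + M 0 1)
           + ((Real.sin θ0 * Real.sin θ0 * Real.sin θ1 * Real.sin θ1 : ℝ) : ℂ) * M 1 1,
         ((Real.cos θ0 * Real.sin θ0 * Real.cos θ1 : ℝ) : ℂ) * M 0 0
           + ((Real.cos θ0 * Real.sin θ0 * Real.sin θ1 : ℝ) : ℂ) * M 1 0;
         ((Real.cos θ0 * Real.sin θ0 * Real.cos θ1 : ℝ) : ℂ) * M 0 0
           + ((Real.cos θ0 * Real.sin θ0 * Real.sin θ1 : ℝ) : ℂ) * M 0 1,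
         ((Real.cos θ0 * Real.cos θ0 : ℝ) : ℂ) * M 0 0] := by
  ext i j
  fin_cases i <;> fin_cases j <;>
    (simp only [Matrix.mul_apply, Matrix.conjTranspose_apply, Fin.sum_univ_two];
     simp [Qmat, Complex.star_def, Complex.conj_ofReal, -Complex.ofReal_cos, -Complex.ofReal_sin]; ring)

end OWAux

namespace OWAux2
open OWAux
variable (θ0 θ1 p : ℝ)

noncomputable def Tsum (t : ℕ) : Matrix (Fin 2) (Fin 2) ℂ :=
  ∑ x ∈ Finset.Icc (-(t : ℤ)) (t : ℤ), owalk θ0 θ1 p t x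

noncomputable def Xsum (t : ℕ) : Matrix (Fin 2) (Fin 2) ℂ :=
  ∑ x ∈ Finset.Icc (-(t : ℤ)) (t : ℤ), (x : ℂ) • owalk θ0 θ1 p t x

lemma Tsum_def (t : ℕ) :
    Tsum θ0 θ1 p t = ∑ x ∈ Finset.Icc (-(t : ℤ)) (t : ℤ), owalk θ0 θ1 p t x := rfl

lemma Xsum_def (t : ℕ) :
    Xsum θ0 θ1 p t = ∑ x ∈ Finset.Icc (-(t : ℤ)) (t : ℤ), (x : ℂ) • owalk θ0 θ1 p t x := rfl

lemma shift_sum (t : ℕ) (w : ℤ → ℂ) (d : ℤ) (hd : d = 1 ∨ d = -1) :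
    ∑ x ∈ Finset.Icc (-(t : ℤ) - 1) ((t : ℤ) + 1), w x • owalk θ0 θ1 p t (x + d)
      = ∑ y ∈ Finset.Icc (-(t : ℤ)) (t : ℤ), w (y - d) • owalk θ0 θ1 p t y := by
  have h1 : ∑ x ∈ Finset.Icc (-(t : ℤ) - 1) ((t : ℤ) + 1), w x • owalk θ0 θ1 p t (x + d)
      = ∑ y ∈ Finset.Icc (-(t : ℤ) - 1 + d) ((t : ℤ) + 1 + d), w (y - d) • owalk θ0 θ1 p t y := by
    rw [← Finset.map_add_right_Icc, Finset.sum_map]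
    simp [addRightEmbedding]
  rw [h1]
  have h2 : ∑ y ∈ Finset.Icc (-(t : ℤ) - 1 + d) ((t : ℤ) + 1 + d), w (y - d) • owalk θ0 θ1 p t y
      = ∑ y ∈ Finset.Icc (-(t : ℤ) - 2) ((t : ℤ) + 2), w (y - d) • owalk θ0 θ1 p t y := by
    apply Finset.sum_subset
    · apply Finset.Icc_subset_Icc <;> omega
    · intro y hy hny
      simp only [Finset.mem_Icc] at hy hny
      rw [owalk_vanish θ0 θ1 p t y (by omega), smul_zero]
  have h3 : ∑ y ∈ Finset.Icc (-(t : ℤ)) (t : ℤ), w (y - d) • owalk θ0 θ1 p t y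
      = ∑ y ∈ Finset.Icc (-(t : ℤ) - 2) ((t : ℤ) + 2), w (y - d) • owalk θ0 θ1 p t y := by
    apply Finset.sum_subset
    · apply Finset.Icc_subset_Icc <;> omega
    · intro y hy hny
      simp only [Finset.mem_Icc] at hy hny
      rw [owalk_vanish θ0 θ1 p t y (by omega), smul_zero]
  rw [h2, h3]

lemma shift_sum_left (t : ℕ) (w : ℤ → ℂ) :
    ∑ x ∈ Finset.Icc (-(t : ℤ) - 1) ((t : ℤ) + 1), w x • owalk θ0 θ1 p t (x + 1)
      = ∑ y ∈ Finset.Icc (-(t : ℤ)) (t : ℤ), w (y - 1) • owalk θ0 θ1 p t y :=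
  shift_sum θ0 θ1 p t w 1 (Or.inl rfl)

lemma shift_sum_right (t : ℕ) (w : ℤ → ℂ) :
    ∑ x ∈ Finset.Icc (-(t : ℤ) - 1) ((t : ℤ) + 1), w x • owalk θ0 θ1 p t (x - 1)
      = ∑ y ∈ Finset.Icc (-(t : ℤ)) (t : ℤ), w (y + 1) • owalk θ0 θ1 p t y := by
  have h := shift_sum θ0 θ1 p t w (-1) (Or.inr rfl)
  calc ∑ x ∈ Finset.Icc (-(t : ℤ) - 1) ((t : ℤ) + 1), w x • owalk θ0 θ1 p t (x - 1)
      = ∑ x ∈ Finset.Icc (-(t : ℤ) - 1) ((t : ℤ) + 1), w x • owalk θ0 θ1 p t (x + (-1)) :=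
        Finset.sum_congr rfl (fun x _ => by rw [show x - 1 = x + (-1) by ring])
    _ = ∑ y ∈ Finset.Icc (-(t : ℤ)) (t : ℤ), w (y - (-1)) • owalk θ0 θ1 p t y := h
    _ = ∑ y ∈ Finset.Icc (-(t : ℤ)) (t : ℤ), w (y + 1) • owalk θ0 θ1 p t y :=
        Finset.sum_congr rfl (fun y _ => by rw [show y - (-1) = y + 1 by ring])

lemma Icc_coe_succ (t : ℕ) :
    Finset.Icc (-((t : ℕ) + 1 : ℕ) : ℤ) (((t : ℕ) + 1 : ℕ) : ℤ)
      = Finset.Icc (-(t : ℤ) - 1) ((t : ℤ) + 1) := by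
  congr 1 <;> push_cast <;> ring

lemma Tsum_succ (t : ℕ) :
    Tsum θ0 θ1 p (t + 1)
      = Pmat θ0 θ1 * Tsum θ0 θ1 p t * (Pmat θ0 θ1)ᴴ
        + Qmat θ0 θ1 * Tsum θ0 θ1 p t * (Qmat θ0 θ1)ᴴ := by
  have hstep : ∀ x : ℤ, owalk θ0 θ1 p (t + 1) x
      = Pmat θ0 θ1 * owalk θ0 θ1 p t (x + 1) * (Pmat θ0 θ1)ᴴ
        + Qmat θ0 θ1 * owalk θ0 θ1 p t (x - 1) * (Qmat θ0 θ1)ᴴ := fun x => by rw [owalk]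
  have hP : ∑ x ∈ Finset.Icc (-(t : ℤ) - 1) ((t : ℤ) + 1), owalk θ0 θ1 p t (x + 1)
      = Tsum θ0 θ1 p t := by
    have := shift_sum_left θ0 θ1 p t (fun _ => (1 : ℂ))
    simp only [one_smul] at this
    rw [this, Tsum_def]
  have hQ : ∑ x ∈ Finset.Icc (-(t : ℤ) - 1) ((t : ℤ) + 1), owalk θ0 θ1 p t (x - 1)
      = Tsum θ0 θ1 p t := by
    have := shift_sum_right θ0 θ1 p t (fun _ => (1 : ℂ))
    simp only [one_smul] at this
    rw [this, Tsum_def]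
  conv_lhs => rw [Tsum_def, Icc_coe_succ]
  simp only [hstep]
  rw [Finset.sum_add_distrib]
  congr 1
  · rw [← Finset.sum_mul, ← Finset.mul_sum, hP]
  · rw [← Finset.sum_mul, ← Finset.mul_sum, hQ]

lemma Xsum_succ (t : ℕ) :
    Xsum θ0 θ1 p (t + 1)
      = Pmat θ0 θ1 * (Xsum θ0 θ1 p t - Tsum θ0 θ1 p t) * (Pmat θ0 θ1)ᴴ
        + Qmat θ0 θ1 * (Xsum θ0 θ1 p t + Tsum θ0 θ1 p t) * (Qmat θ0 θ1)ᴴ := by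
  have hstep : ∀ x : ℤ, owalk θ0 θ1 p (t + 1) x
      = Pmat θ0 θ1 * owalk θ0 θ1 p t (x + 1) * (Pmat θ0 θ1)ᴴ
        + Qmat θ0 θ1 * owalk θ0 θ1 p t (x - 1) * (Qmat θ0 θ1)ᴴ := fun x => by rw [owalk]
  have hP : ∑ x ∈ Finset.Icc (-(t : ℤ) - 1) ((t : ℤ) + 1), (x : ℂ) • owalk θ0 θ1 p t (x + 1)
      = Xsum θ0 θ1 p t - Tsum θ0 θ1 p t := by
    rw [shift_sum_left θ0 θ1 p t (fun x => (x : ℂ)), Xsum_def, Tsum_def,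
      ← Finset.sum_sub_distrib]
    apply Finset.sum_congr rfl
    intro y _
    push_cast
    rw [sub_smul, one_smul]
  have hQ : ∑ x ∈ Finset.Icc (-(t : ℤ) - 1) ((t : ℤ) + 1), (x : ℂ) • owalk θ0 θ1 p t (x - 1)
      = Xsum θ0 θ1 p t + Tsum θ0 θ1 p t := by
    rw [shift_sum_right θ0 θ1 p t (fun x => (x : ℂ)), Xsum_def, Tsum_def,
      ← Finset.sum_add_distrib]
    apply Finset.sum_congr rfl
    intro y _
    push_cast
    rw [add_smul, one_smul]
  conv_lhs => rw [Xsum_def, Icc_coe_succ]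
  simp only [hstep, smul_add]
  rw [Finset.sum_add_distrib]
  congr 1
  · have e1 : ∀ x : ℤ, (x : ℂ) • (Pmat θ0 θ1 * owalk θ0 θ1 p t (x + 1) * (Pmat θ0 θ1)ᴴ)
        = Pmat θ0 θ1 * ((x : ℂ) • owalk θ0 θ1 p t (x + 1)) * (Pmat θ0 θ1)ᴴ := fun x => by
      rw [Matrix.mul_smul, Matrix.smul_mul]
    simp only [e1]
    rw [← Finset.sum_mul, ← Finset.mul_sum, hP]
  · have e1 : ∀ x : ℤ, (x : ℂ) • (Qmat θ0 θ1 * owalk θ0 θ1 p t (x - 1) * (Qmat θ0 θ1)ᴴ)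
        = Qmat θ0 θ1 * ((x : ℂ) • owalk θ0 θ1 p t (x - 1)) * (Qmat θ0 θ1)ᴴ := fun x => by
      rw [Matrix.mul_smul, Matrix.smul_mul]
    simp only [e1]
    rw [← Finset.sum_mul, ← Finset.mul_sum, hQ]

end OWAux2

namespace OWAux3
open OWAux OWAux2
open scoped ComplexOrder
variable (θ0 θ1 p : ℝ)

lemma Tsum_zero : Tsum θ0 θ1 p 0 = Matrix.diagonal ![(p : ℂ), ((1 - p : ℝ) : ℂ)] := by
  rw [Tsum_def]
  norm_num [owalk]

lemma Xsum_zero : Xsum θ0 θ1 p 0 = 0 := by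
  rw [Xsum_def]
  norm_num

lemma Tsum_psd (hp0 : 0 ≤ p) (hp1 : p ≤ 1) : ∀ t : ℕ, (Tsum θ0 θ1 p t).PosSemidef
  | 0 => by
    rw [Tsum_zero]
    apply Matrix.PosSemidef.diagonal
    intro i
    fin_cases i
    · exact Complex.zero_le_real.mpr hp0
    · exact Complex.zero_le_real.mpr (by linarith)
  | t + 1 => by
    rw [Tsum_succ]
    exact ((Tsum_psd hp0 hp1 t).mul_mul_conjTranspose_same _).add
      ((Tsum_psd hp0 hp1 t).mul_mul_conjTranspose_same _)

lemma re10 (hp0 : 0 ≤ p) (hp1 : p ≤ 1) (t : ℕ) :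
    (Tsum θ0 θ1 p t 1 0).re = (Tsum θ0 θ1 p t 0 1).re := by
  have h := ((Tsum_psd θ0 θ1 p hp0 hp1 t).1.apply 1 0)
  rw [← h]
  simp [Complex.star_def]

noncomputable def uu (t : ℕ) : ℝ := (Tsum θ0 θ1 p t 0 0).re - (Tsum θ0 θ1 p t 1 1).re
noncomputable def vv (t : ℕ) : ℝ := (Tsum θ0 θ1 p t 0 1).re
noncomputable def mm (t : ℕ) : ℝ := (Xsum θ0 θ1 p t 0 0).re + (Xsum θ0 θ1 p t 1 1).re

noncomputable def al : ℝ := Real.sin θ0 ^ 2 * (Real.cos θ1 ^ 2 - Real.sin θ1 ^ 2) - Real.cos θ0 ^ 2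
noncomputable def be : ℝ := 4 * Real.sin θ0 ^ 2 * Real.sin θ1 * Real.cos θ1
noncomputable def ga : ℝ := Real.cos θ0 * Real.sin θ0 * Real.cos θ1
noncomputable def de : ℝ := 2 * Real.cos θ0 * Real.sin θ0 * Real.sin θ1
noncomputable def aP : ℝ :=
  Real.cos θ0 ^ 2 + Real.sin θ0 ^ 2 * Real.cos θ1 ^ 2 - Real.sin θ0 ^ 2 * Real.sin θ1 ^ 2

lemma uu_succ (hp0 : 0 ≤ p) (hp1 : p ≤ 1) (t : ℕ) :
    uu θ0 θ1 p (t + 1) = al θ0 θ1 * uu θ0 θ1 p t + be θ0 θ1 * vv θ0 θ1 p t := by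
  have h10 := re10 θ0 θ1 p hp0 hp1 t
  unfold uu vv al be
  rw [Tsum_succ, Pconj, Qconj]
  simp only [Matrix.add_apply, Matrix.of_apply, Matrix.cons_val', Matrix.cons_val_zero,
    Matrix.cons_val_one, Matrix.head_cons, Matrix.head_fin_const, Matrix.empty_val',
    Matrix.cons_val_fin_one, Complex.add_re, Complex.sub_re, Complex.re_ofReal_mul]
  rw [h10]
  ring

lemma vv_succ (hp0 : 0 ≤ p) (hp1 : p ≤ 1) (t : ℕ) :
    vv θ0 θ1 p (t + 1) = ga θ0 θ1 * uu θ0 θ1 p t + de θ0 θ1 * vv θ0 θ1 p t := by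
  have h10 := re10 θ0 θ1 p hp0 hp1 t
  unfold uu vv ga de
  rw [Tsum_succ, Pconj, Qconj]
  simp only [Matrix.add_apply, Matrix.of_apply, Matrix.cons_val', Matrix.cons_val_zero,
    Matrix.cons_val_one, Matrix.head_cons, Matrix.head_fin_const, Matrix.empty_val',
    Matrix.cons_val_fin_one, Complex.add_re, Complex.sub_re, Complex.re_ofReal_mul]
  rw [h10]
  ring

lemma mm_succ (hp0 : 0 ≤ p) (hp1 : p ≤ 1) (t : ℕ) :
    mm θ0 θ1 p (t + 1) = mm θ0 θ1 p t + aP θ0 θ1 * uu θ0 θ1 p t + be θ0 θ1 * vv θ0 θ1 p t := by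
  have h10 := re10 θ0 θ1 p hp0 hp1 t
  have hs0 := Real.sin_sq_add_cos_sq θ0
  have hs1 := Real.sin_sq_add_cos_sq θ1
  unfold mm uu vv aP be
  rw [Xsum_succ, Pconj, Qconj]
  simp only [Matrix.add_apply, Matrix.sub_apply, Matrix.of_apply, Matrix.cons_val',
    Matrix.cons_val_zero, Matrix.cons_val_one, Matrix.head_cons, Matrix.head_fin_const,
    Matrix.empty_val', Matrix.cons_val_fin_one, Complex.add_re, Complex.sub_re,
    Complex.re_ofReal_mul]
  rw [h10]
  linear_combination ((Xsum θ0 θ1 p t 0 0).re + (Xsum θ0 θ1 p t 1 1).re) * hs0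
    + Real.sin θ0 ^ 2 * ((Xsum θ0 θ1 p t 0 0).re + (Xsum θ0 θ1 p t 1 1).re) * hs1

lemma tre (hp0 : 0 ≤ p) (hp1 : p ≤ 1) :
    ∀ t : ℕ, (Tsum θ0 θ1 p t 0 0).re + (Tsum θ0 θ1 p t 1 1).re = 1
  | 0 => by
    rw [Tsum_zero]
    simp [Matrix.diagonal]
  | t + 1 => by
    have ih := tre hp0 hp1 t
    have hs0 := Real.sin_sq_add_cos_sq θ0
    have hs1 := Real.sin_sq_add_cos_sq θ1
    rw [Tsum_succ, Pconj, Qconj]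
    simp only [Matrix.add_apply, Matrix.of_apply, Matrix.cons_val', Matrix.cons_val_zero,
      Matrix.cons_val_one, Matrix.head_cons, Matrix.head_fin_const, Matrix.empty_val',
      Matrix.cons_val_fin_one, Complex.add_re, Complex.sub_re, Complex.re_ofReal_mul]
    linear_combination (Real.cos θ0 ^ 2 + Real.sin θ0 ^ 2 * Real.cos θ1 ^ 2
        + Real.sin θ0 ^ 2 * Real.sin θ1 ^ 2) * ih
      + hs0 + Real.sin θ0 ^ 2 * hs1

end OWAux3

namespace OWAux4
open OWAux OWAux2 OWAux3
open scoped ComplexOrder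
variable (θ0 θ1 p : ℝ)

lemma diag00_nonneg (hp0 : 0 ≤ p) (hp1 : p ≤ 1) (t : ℕ) :
    0 ≤ (Tsum θ0 θ1 p t 0 0).re := by
  have h := (Tsum_psd θ0 θ1 p hp0 hp1 t).dotProduct_mulVec_nonneg ![1, 0]
  simp [dotProduct, Matrix.mulVec, Fin.sum_univ_two] at h
  simpa using (Complex.le_def.mp h).1

lemma diag11_nonneg (hp0 : 0 ≤ p) (hp1 : p ≤ 1) (t : ℕ) :
    0 ≤ (Tsum θ0 θ1 p t 1 1).re := by
  have h := (Tsum_psd θ0 θ1 p hp0 hp1 t).dotProduct_mulVec_nonneg ![0, 1]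
  simp [dotProduct, Matrix.mulVec, Fin.sum_univ_two] at h
  simpa using (Complex.le_def.mp h).1

lemma vv_plus (hp0 : 0 ≤ p) (hp1 : p ≤ 1) (t : ℕ) :
    0 ≤ 1 + 2 * vv θ0 θ1 p t := by
  have h := (Tsum_psd θ0 θ1 p hp0 hp1 t).dotProduct_mulVec_nonneg ![1, 1]
  simp [dotProduct, Matrix.mulVec, Fin.sum_univ_two] at h
  have hre := (Complex.le_def.mp h).1
  simp [Complex.add_re] at hre
  have htr := tre θ0 θ1 p hp0 hp1 t
  have h10 := re10 θ0 θ1 p hp0 hp1 t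
  unfold vv
  linarith

lemma vv_minus (hp0 : 0 ≤ p) (hp1 : p ≤ 1) (t : ℕ) :
    0 ≤ 1 - 2 * vv θ0 θ1 p t := by
  have h := (Tsum_psd θ0 θ1 p hp0 hp1 t).dotProduct_mulVec_nonneg ![1, -1]
  simp [dotProduct, Matrix.mulVec, Fin.sum_univ_two] at h
  have hre := (Complex.le_def.mp h).1
  simp [Complex.add_re, Complex.sub_re] at hre
  have htr := tre θ0 θ1 p hp0 hp1 t
  have h10 := re10 θ0 θ1 p hp0 hp1 t
  unfold vv
  linarith

lemma uu_bound (hp0 : 0 ≤ p) (hp1 : p ≤ 1) (t : ℕ) : |uu θ0 θ1 p t| ≤ 1 := by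
  have h0 := diag00_nonneg θ0 θ1 p hp0 hp1 t
  have h1 := diag11_nonneg θ0 θ1 p hp0 hp1 t
  have htr := tre θ0 θ1 p hp0 hp1 t
  unfold uu
  rw [abs_le]
  constructor <;> linarith

lemma vv_bound (hp0 : 0 ≤ p) (hp1 : p ≤ 1) (t : ℕ) : |vv θ0 θ1 p t| ≤ 1 / 2 := by
  have h1 := vv_plus θ0 θ1 p hp0 hp1 t
  have h2 := vv_minus θ0 θ1 p hp0 hp1 t
  rw [abs_le]
  constructor <;> linarith

lemma mm_zero : mm θ0 θ1 p 0 = 0 := by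
  unfold mm
  rw [Xsum_zero]
  simp

lemma moment1_eq (t : ℕ) : moment1 θ0 θ1 p t = mm θ0 θ1 p t := by
  unfold moment1 findprob mm
  rw [Xsum_def, Matrix.sum_apply, Matrix.sum_apply, Complex.re_sum, Complex.re_sum,
    ← Finset.sum_add_distrib]
  apply Finset.sum_congr rfl
  intro x _
  simp only [Matrix.smul_apply, smul_eq_mul, Matrix.trace_fin_two, Complex.add_re,
    Complex.mul_re, Complex.intCast_re, Complex.intCast_im]
  push_cast
  ring

end OWAux4

namespace OWAux5
open OWAux OWAux2 OWAux3 OWAux4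
variable (θ0 θ1 p : ℝ)

lemma bnd {x y : ℝ} (r s : ℝ) (hx : |x| ≤ 2) (hy : |y| ≤ 1) :
    |r * x + s * y| ≤ |r| * 2 + |s| * 1 := by
  calc |r * x + s * y| ≤ |r * x| + |s * y| := abs_add_le _ _
    _ = |r| * |x| + |s| * |y| := by rw [abs_mul, abs_mul]
    _ ≤ |r| * 2 + |s| * 1 :=
      add_le_add (mul_le_mul_of_nonneg_left hx (abs_nonneg r))
        (mul_le_mul_of_nonneg_left hy (abs_nonneg s))

lemma hM1 (hp0 : 0 ≤ p) (hp1 : p ≤ 1) (t : ℕ) :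
    moment1 θ0 θ1 p t = aP θ0 θ1 * (∑ s ∈ Finset.range t, uu θ0 θ1 p s)
      + be θ0 θ1 * (∑ s ∈ Finset.range t, vv θ0 θ1 p s) := by
  induction t with
  | zero => simp [moment1_eq, mm_zero]
  | succ t ih =>
      rw [moment1_eq] at ih ⊢
      rw [mm_succ θ0 θ1 p hp0 hp1 t, Finset.sum_range_succ, Finset.sum_range_succ]
      rw [ih]
      ring

lemma hM2 (hp0 : 0 ≤ p) (hp1 : p ≤ 1) (t : ℕ) :
    (1 - al θ0 θ1) * (∑ s ∈ Finset.range t, uu θ0 θ1 p s)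
      - be θ0 θ1 * (∑ s ∈ Finset.range t, vv θ0 θ1 p s)
      = uu θ0 θ1 p 0 - uu θ0 θ1 p t := by
  induction t with
  | zero => simp
  | succ t ih =>
      rw [Finset.sum_range_succ, Finset.sum_range_succ, uu_succ θ0 θ1 p hp0 hp1 t]
      linear_combination ih

lemma hM3 (hp0 : 0 ≤ p) (hp1 : p ≤ 1) (t : ℕ) :
    (1 - de θ0 θ1) * (∑ s ∈ Finset.range t, vv θ0 θ1 p s)
      - ga θ0 θ1 * (∑ s ∈ Finset.range t, uu θ0 θ1 p s)
      = vv θ0 θ1 p 0 - vv θ0 θ1 p t := by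
  induction t with
  | zero => simp
  | succ t ih =>
      rw [Finset.sum_range_succ, Finset.sum_range_succ, vv_succ θ0 θ1 p hp0 hp1 t]
      linear_combination ih

end OWAux5

open OWAux OWAux2 OWAux3 OWAux4 OWAux5 in
theorem owalk_moment1_bounded (θ0 θ1 p : ℝ) (hp0 : 0 ≤ p) (hp1 : p ≤ 1)
    (hne : Real.cos θ0 ≠ Real.sin θ0 * Real.sin θ1)
    (hsc : Real.sin θ0 * Real.cos θ1 ≠ 0) (hc0 : Real.cos θ0 ≠ 0) :
    ∃ C : ℝ, ∀ t : ℕ, |moment1 θ0 θ1 p t| ≤ C := by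
  have hs0 := Real.sin_sq_add_cos_sq θ0
  have hs1 := Real.sin_sq_add_cos_sq θ1
  set A := al θ0 θ1 with hA
  set B := be θ0 θ1 with hB
  set G := ga θ0 θ1 with hG
  set Dl := de θ0 θ1 with hDl
  set AP := aP θ0 θ1 with hAP
  set D : ℝ := (1 - A) * (1 - Dl) - B * G with hD
  have hDeq : D = 2 * (Real.cos θ0 - Real.sin θ0 * Real.sin θ1) ^ 2 := by
    rw [hD, hA, hB, hG, hDl]
    unfold al be ga de
    linear_combination (-(1 + 2 * Real.cos θ0 * Real.sin θ0 * Real.sin θ1)) * hs0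
      + (-(1 + 2 * Real.cos θ0 * Real.sin θ0 * Real.sin θ1) * Real.sin θ0 ^ 2) * hs1
  have hx : Real.cos θ0 - Real.sin θ0 * Real.sin θ1 ≠ 0 := sub_ne_zero.mpr hne
  have hDpos : 0 < D := by
    rw [hDeq]
    have h2 : 0 < (Real.cos θ0 - Real.sin θ0 * Real.sin θ1) ^ 2 :=
      lt_of_le_of_ne (sq_nonneg _) (Ne.symm (pow_ne_zero 2 hx))
    linarith
  refine ⟨(|AP| * (|1 - Dl| * 2 + |B| * 1) + |B| * (|G| * 2 + |1 - A| * 1)) / D, fun t => ?_⟩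
  have hU := hM2 θ0 θ1 p hp0 hp1 t
  have hV := hM3 θ0 θ1 p hp0 hp1 t
  have h1 := hM1 θ0 θ1 p hp0 hp1 t
  set U := ∑ s ∈ Finset.range t, uu θ0 θ1 p s with hUdef
  set V := ∑ s ∈ Finset.range t, vv θ0 θ1 p s with hVdef
  set e := uu θ0 θ1 p 0 - uu θ0 θ1 p t with hedef
  set f := vv θ0 θ1 p 0 - vv θ0 θ1 p t with hfdef
  have he : |e| ≤ 2 := by
    have b0 := uu_bound θ0 θ1 p hp0 hp1 0
    have bt := uu_bound θ0 θ1 p hp0 hp1 t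
    rw [hedef]
    calc |uu θ0 θ1 p 0 - uu θ0 θ1 p t| ≤ |uu θ0 θ1 p 0| + |uu θ0 θ1 p t| := abs_sub _ _
      _ ≤ 2 := by linarith
  have hf : |f| ≤ 1 := by
    have b0 := vv_bound θ0 θ1 p hp0 hp1 0
    have bt := vv_bound θ0 θ1 p hp0 hp1 t
    rw [hfdef]
    calc |vv θ0 θ1 p 0 - vv θ0 θ1 p t| ≤ |vv θ0 θ1 p 0| + |vv θ0 θ1 p t| := abs_sub _ _
      _ ≤ 1 := by linarith
  have key : moment1 θ0 θ1 p t * D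
      = AP * ((1 - Dl) * e + B * f) + B * (G * e + (1 - A) * f) := by
    rw [h1, hD, hedef, hfdef]
    linear_combination (AP * (1 - Dl) + B * G) * hU + (AP * B + B * (1 - A)) * hV
  have hm : moment1 θ0 θ1 p t
      = (AP * ((1 - Dl) * e + B * f) + B * (G * e + (1 - A) * f)) / D :=
    eq_div_of_mul_eq hDpos.ne' key
  rw [hm, abs_div, abs_of_pos hDpos]
  gcongr
  calc |AP * ((1 - Dl) * e + B * f) + B * (G * e + (1 - A) * f)|
      ≤ |AP * ((1 - Dl) * e + B * f)| + |B * (G * e + (1 - A) * f)| := abs_add_le _ _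
    _ = |AP| * |(1 - Dl) * e + B * f| + |B| * |G * e + (1 - A) * f| := by
        rw [abs_mul, abs_mul]
    _ ≤ |AP| * (|1 - Dl| * 2 + |B| * 1) + |B| * (|G| * 2 + |1 - A| * 1) :=
        add_le_add (mul_le_mul_of_nonneg_left (bnd _ _ he hf) (abs_nonneg _))
          (mul_le_mul_of_nonneg_left (bnd _ _ he hf) (abs_nonneg _))
end

section
/- Suppose cos θ0 ≠ sin θ0 · sin θ1, sin θ0 · cos θ1 ≠ 0, and cos θ0 ≠ 0. Then the sequence E₂(t)/t converges, as t → ∞, to s0²·(c1² + 4·c0²·s1² + 4·c0·s0·s1·(c1² − 2·c0²·s1²))/(c0 − s0·s1)², where c0 = cos θ0, s0 = sin θ0, c1 = cos θ1, s1 = sin θ1. -/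
open Matrix Complex Filter

lemma owalk_vanish (θ0 θ1 p : ℝ) : ∀ (t : ℕ) (x : ℤ), ((t:ℤ) < x ∨ x < -(t:ℤ)) →
    owalk θ0 θ1 p t x = 0 := by
  intro t
  induction t with
  | zero => intro x hx; have : x ≠ 0 := by omega
            simp [owalk, this]
  | succ t ih =>
    intro x hx
    have h1 : owalk θ0 θ1 p t (x+1) = 0 := ih _ (by push_cast at hx ⊢; omega)
    have h2 : owalk θ0 θ1 p t (x-1) = 0 := ih _ (by push_cast at hx ⊢; omega)
    simp [owalk, h1, h2]

lemma shift_up (θ0 θ1 p : ℝ) (t : ℕ) (g : ℤ → ℂ) (F : Matrix (Fin 2) (Fin 2) ℂ → ℂ)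
    (hF : F 0 = 0) :
    ∑ x ∈ Finset.Icc (-((t+1:ℕ):ℤ)) ((t+1:ℕ):ℤ), g x * F (owalk θ0 θ1 p t (x+1))
      = ∑ y ∈ Finset.Icc (-(t:ℤ)) (t:ℤ), g (y-1) * F (owalk θ0 θ1 p t y) := by
  have hmap : Finset.Icc (-(t:ℤ)) ((t:ℤ)+2)
      = Finset.map (addRightEmbedding 1) (Finset.Icc (-((t+1:ℕ):ℤ)) ((t+1:ℕ):ℤ)) := by
    rw [Finset.map_add_right_Icc]; congr 1 <;> push_cast <;> ring
  have h1 : ∑ y ∈ Finset.Icc (-(t:ℤ)) ((t:ℤ)+2), g (y-1) * F (owalk θ0 θ1 p t y)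
      = ∑ x ∈ Finset.Icc (-((t+1:ℕ):ℤ)) ((t+1:ℕ):ℤ), g x * F (owalk θ0 θ1 p t (x+1)) := by
    rw [hmap, Finset.sum_map]
    refine Finset.sum_congr rfl fun x _ => ?_
    simp [addRightEmbedding]
  rw [← h1]
  refine (Finset.sum_subset (Finset.Icc_subset_Icc_right (by omega)) ?_).symm
  intro y hy hy'
  simp only [Finset.mem_Icc] at hy hy'
  have : owalk θ0 θ1 p t y = 0 := owalk_vanish θ0 θ1 p t y (by omega)
  rw [this, hF, mul_zero]

lemma shift_down (θ0 θ1 p : ℝ) (t : ℕ) (g : ℤ → ℂ) (F : Matrix (Fin 2) (Fin 2) ℂ → ℂ)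
    (hF : F 0 = 0) :
    ∑ x ∈ Finset.Icc (-((t+1:ℕ):ℤ)) ((t+1:ℕ):ℤ), g x * F (owalk θ0 θ1 p t (x-1))
      = ∑ y ∈ Finset.Icc (-(t:ℤ)) (t:ℤ), g (y+1) * F (owalk θ0 θ1 p t y) := by
  have hmap : Finset.Icc (-(t:ℤ)-2) ((t:ℤ))
      = Finset.map (addRightEmbedding (-1)) (Finset.Icc (-((t+1:ℕ):ℤ)) ((t+1:ℕ):ℤ)) := by
    rw [Finset.map_add_right_Icc]; congr 1 <;> push_cast <;> ring
  have h1 : ∑ y ∈ Finset.Icc (-(t:ℤ)-2) ((t:ℤ)), g (y+1) * F (owalk θ0 θ1 p t y)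
      = ∑ x ∈ Finset.Icc (-((t+1:ℕ):ℤ)) ((t+1:ℕ):ℤ), g x * F (owalk θ0 θ1 p t (x-1)) := by
    rw [hmap, Finset.sum_map]
    refine Finset.sum_congr rfl fun x _ => ?_
    simp [addRightEmbedding, sub_eq_add_neg]
  rw [← h1]
  refine (Finset.sum_subset (Finset.Icc_subset_Icc_left (by omega)) ?_).symm
  intro y hy hy'
  simp only [Finset.mem_Icc] at hy hy'
  have : owalk θ0 θ1 p t y = 0 := owalk_vanish θ0 θ1 p t y (by omega)
  rw [this, hF, mul_zero]

lemma Pmat_ct (θ0 θ1 : ℝ) : (Pmat θ0 θ1)ᴴ =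
    !![0, ((Real.sin θ0 * Real.sin θ1 : ℝ) : ℂ);
       (Real.cos θ0 : ℂ), (-((Real.sin θ0 * Real.cos θ1 : ℝ) : ℂ))] := by
  ext i j
  fin_cases i <;> fin_cases j <;>
    simp [Pmat, Matrix.conjTranspose_apply, Complex.star_def, Complex.conj_ofReal,
      -Complex.ofReal_sin, -Complex.ofReal_cos, -Complex.ofReal_mul]

lemma Qmat_ct (θ0 θ1 : ℝ) : (Qmat θ0 θ1)ᴴ =
    !![((Real.sin θ0 * Real.cos θ1 : ℝ) : ℂ), (Real.cos θ0 : ℂ);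
       ((Real.sin θ0 * Real.sin θ1 : ℝ) : ℂ), 0] := by
  ext i j
  fin_cases i <;> fin_cases j <;>
    simp [Qmat, Matrix.conjTranspose_apply, Complex.star_def, Complex.conj_ofReal,
      -Complex.ofReal_sin, -Complex.ofReal_cos, -Complex.ofReal_mul]

section ptw
variable (θ0 θ1 : ℝ)

local notation "c0" => (Real.cos θ0 : ℂ)
local notation "s0" => (Real.sin θ0 : ℂ)
local notation "c1" => (Real.cos θ1 : ℂ)
local notation "s1" => (Real.sin θ1 : ℂ)

lemma pyth0C : c0^2 + s0^2 = 1 := by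
  have := Real.cos_sq_add_sin_sq θ0
  exact_mod_cast congrArg (Complex.ofReal) this

lemma pyth1C : c1^2 + s1^2 = 1 := by
  have := Real.cos_sq_add_sin_sq θ1
  exact_mod_cast congrArg (Complex.ofReal) this

lemma ptw1 (X : Matrix (Fin 2) (Fin 2) ℂ) :
    (Pmat θ0 θ1 * X * (Pmat θ0 θ1)ᴴ).trace + (Qmat θ0 θ1 * X * (Qmat θ0 θ1)ᴴ).trace
      = X.trace := by
  rw [Pmat_ct, Qmat_ct, Matrix.eta_fin_two X]
  simp only [Pmat, Qmat, Matrix.mul_fin_two, Matrix.trace_fin_two_of, Complex.ofReal_mul]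
  linear_combination (X 0 0 + X 1 1) * pyth0C θ0 + s0^2 * (X 0 0 + X 1 1) * pyth1C θ1

lemma ptw2 (X : Matrix (Fin 2) (Fin 2) ℂ) (w : ℂ) :
    (w-1) * ((Pmat θ0 θ1 * X * (Pmat θ0 θ1)ᴴ) 0 0 - (Pmat θ0 θ1 * X * (Pmat θ0 θ1)ᴴ) 1 1)
      + (w+1) * ((Qmat θ0 θ1 * X * (Qmat θ0 θ1)ᴴ) 0 0 - (Qmat θ0 θ1 * X * (Qmat θ0 θ1)ᴴ) 1 1)
    = -(c0^2 + (s0*s1)^2 - (s0*c1)^2) * (w * (X 0 0 - X 1 1))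
      + 2*((s0*s1)*(s0*c1)) * (w * (X 0 1 + X 1 0))
      + ((s0*s1)^2 + (s0*c1)^2 - c0^2) * X.trace := by
  rw [Pmat_ct, Qmat_ct, Matrix.eta_fin_two X]
  simp only [Pmat, Qmat, Matrix.mul_fin_two, Matrix.trace_fin_two_of, Complex.ofReal_mul,
    Matrix.of_apply, Matrix.cons_val', Matrix.cons_val_zero, Matrix.cons_val_one,
    Matrix.head_cons, Matrix.head_fin_const, Matrix.empty_val', Matrix.cons_val_fin_one]
  ring

lemma ptw3 (X : Matrix (Fin 2) (Fin 2) ℂ) (w : ℂ) :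
    (w-1) * ((Pmat θ0 θ1 * X * (Pmat θ0 θ1)ᴴ) 0 1 + (Pmat θ0 θ1 * X * (Pmat θ0 θ1)ᴴ) 1 0)
      + (w+1) * ((Qmat θ0 θ1 * X * (Qmat θ0 θ1)ᴴ) 0 1 + (Qmat θ0 θ1 * X * (Qmat θ0 θ1)ᴴ) 1 0)
    = 2*(c0*(s0*c1)) * (w * (X 0 0 - X 1 1))
      + 2*(c0*(s0*s1)) * (w * (X 0 1 + X 1 0))
      + (2*(c0*(s0*c1))) * X.trace := by
  rw [Pmat_ct, Qmat_ct, Matrix.eta_fin_two X]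
  simp only [Pmat, Qmat, Matrix.mul_fin_two, Matrix.trace_fin_two_of, Complex.ofReal_mul,
    Matrix.of_apply, Matrix.cons_val', Matrix.cons_val_zero, Matrix.cons_val_one,
    Matrix.head_cons, Matrix.head_fin_const, Matrix.empty_val', Matrix.cons_val_fin_one]
  ring

lemma ptw4 (X : Matrix (Fin 2) (Fin 2) ℂ) (w : ℂ) :
    (w-1)^2 * (Pmat θ0 θ1 * X * (Pmat θ0 θ1)ᴴ).trace
      + (w+1)^2 * (Qmat θ0 θ1 * X * (Qmat θ0 θ1)ᴴ).trace
    = w^2 * X.trace + 2*(c0^2 + (s0*c1)^2 - (s0*s1)^2) * (w * (X 0 0 - X 1 1))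
      + 4*((s0*s1)*(s0*c1)) * (w * (X 0 1 + X 1 0)) + X.trace := by
  rw [Pmat_ct, Qmat_ct, Matrix.eta_fin_two X]
  simp only [Pmat, Qmat, Matrix.mul_fin_two, Matrix.trace_fin_two_of, Complex.ofReal_mul,
    Matrix.of_apply, Matrix.cons_val', Matrix.cons_val_zero, Matrix.cons_val_one,
    Matrix.head_cons, Matrix.head_fin_const, Matrix.empty_val', Matrix.cons_val_fin_one]
  linear_combination (X 0 0 + X 0 0 * w^2 + X 1 1 + X 1 1 * w^2) * pyth0C θ0
    + (s0^2 * (X 0 0 + X 0 0 * w^2 + X 1 1 + X 1 1 * w^2)) * pyth1C θ1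

end ptw
lemma step_sum (θ0 θ1 p : ℝ) (t : ℕ) (g : ℤ → ℂ) (F : Matrix (Fin 2) (Fin 2) ℂ → ℂ)
    (hadd : ∀ A B, F (A + B) = F A + F B) (hF : F 0 = 0) :
    ∑ x ∈ Finset.Icc (-((t+1:ℕ):ℤ)) ((t+1:ℕ):ℤ), g x * F (owalk θ0 θ1 p (t+1) x)
      = ∑ y ∈ Finset.Icc (-(t:ℤ)) (t:ℤ),
          (g (y-1) * F (Pmat θ0 θ1 * owalk θ0 θ1 p t y * (Pmat θ0 θ1)ᴴ)
            + g (y+1) * F (Qmat θ0 θ1 * owalk θ0 θ1 p t y * (Qmat θ0 θ1)ᴴ)) := by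
  have h1 : ∀ x : ℤ, g x * F (owalk θ0 θ1 p (t+1) x)
      = g x * F (Pmat θ0 θ1 * owalk θ0 θ1 p t (x+1) * (Pmat θ0 θ1)ᴴ)
        + g x * F (Qmat θ0 θ1 * owalk θ0 θ1 p t (x-1) * (Qmat θ0 θ1)ᴴ) := by
    intro x
    have : owalk θ0 θ1 p (t+1) x
        = Pmat θ0 θ1 * owalk θ0 θ1 p t (x+1) * (Pmat θ0 θ1)ᴴ
          + Qmat θ0 θ1 * owalk θ0 θ1 p t (x-1) * (Qmat θ0 θ1)ᴴ := rfl
    rw [this, hadd, mul_add]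
  rw [Finset.sum_congr rfl (fun x _ => h1 x), Finset.sum_add_distrib]
  rw [shift_up θ0 θ1 p t g (fun M => F (Pmat θ0 θ1 * M * (Pmat θ0 θ1)ᴴ))
        (by simp [hF]),
      shift_down θ0 θ1 p t g (fun M => F (Qmat θ0 θ1 * M * (Qmat θ0 θ1)ᴴ))
        (by simp [hF]),
      ← Finset.sum_add_distrib]

/-- total trace -/
noncomputable def trS (θ0 θ1 p : ℝ) (t : ℕ) : ℂ :=
  ∑ x ∈ Finset.Icc (-(t:ℤ)) (t:ℤ), (owalk θ0 θ1 p t x).trace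

/-- first-moment of the diagonal difference -/
noncomputable def Us (θ0 θ1 p : ℝ) (t : ℕ) : ℂ :=
  ∑ x ∈ Finset.Icc (-(t:ℤ)) (t:ℤ),
    (x:ℂ) * ((owalk θ0 θ1 p t x) 0 0 - (owalk θ0 θ1 p t x) 1 1)

/-- first-moment of the off-diagonal sum -/
noncomputable def Vs (θ0 θ1 p : ℝ) (t : ℕ) : ℂ :=
  ∑ x ∈ Finset.Icc (-(t:ℤ)) (t:ℤ),
    (x:ℂ) * ((owalk θ0 θ1 p t x) 0 1 + (owalk θ0 θ1 p t x) 1 0)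

/-- second moment (complex form) -/
noncomputable def T2s (θ0 θ1 p : ℝ) (t : ℕ) : ℂ :=
  ∑ x ∈ Finset.Icc (-(t:ℤ)) (t:ℤ), (x:ℂ)^2 * (owalk θ0 θ1 p t x).trace

lemma trS_succ (θ0 θ1 p : ℝ) (t : ℕ) : trS θ0 θ1 p (t+1) = trS θ0 θ1 p t := by
  have h0 : trS θ0 θ1 p (t+1)
      = ∑ x ∈ Finset.Icc (-((t+1:ℕ):ℤ)) ((t+1:ℕ):ℤ),
          (1:ℂ) * (owalk θ0 θ1 p (t+1) x).trace := by
    simp [trS]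
  rw [h0, step_sum θ0 θ1 p t (fun _ => 1) Matrix.trace (by simp) (by simp)]
  simp only [one_mul]
  exact Finset.sum_congr rfl fun y _ => ptw1 θ0 θ1 _

lemma trS_eq_one (θ0 θ1 p : ℝ) (t : ℕ) : trS θ0 θ1 p t = 1 := by
  induction t with
  | zero =>
    simp only [trS, Nat.cast_zero, neg_zero, Finset.Icc_self, Finset.sum_singleton]
    have : owalk θ0 θ1 p 0 0 = Matrix.diagonal ![(p : ℂ), ((1 - p : ℝ) : ℂ)] := by
      simp [owalk]
    rw [this, Matrix.trace_diagonal]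
    simp
  | succ t ih => rw [trS_succ, ih]
section rec
variable (θ0 θ1 p : ℝ)

local notation "c0" => (Real.cos θ0 : ℂ)
local notation "s0" => (Real.sin θ0 : ℂ)
local notation "c1" => (Real.cos θ1 : ℂ)
local notation "s1" => (Real.sin θ1 : ℂ)

lemma Us_succ (t : ℕ) : Us θ0 θ1 p (t+1)
    = -(c0^2 + (s0*s1)^2 - (s0*c1)^2) * Us θ0 θ1 p t
      + 2*((s0*s1)*(s0*c1)) * Vs θ0 θ1 p t
      + ((s0*s1)^2 + (s0*c1)^2 - c0^2) * trS θ0 θ1 p t := by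
  have h0 : Us θ0 θ1 p (t+1)
      = ∑ x ∈ Finset.Icc (-((t+1:ℕ):ℤ)) ((t+1:ℕ):ℤ),
          (x:ℂ) * ((fun M : Matrix (Fin 2) (Fin 2) ℂ => M 0 0 - M 1 1) (owalk θ0 θ1 p (t+1) x)) := rfl
  rw [h0, step_sum θ0 θ1 p t (fun x : ℤ => (x:ℂ))
      (fun M => M 0 0 - M 1 1) (by intro A B; simp [Matrix.add_apply]; ring) (by simp)]
  have hpt : ∀ y ∈ Finset.Icc (-(t:ℤ)) (t:ℤ),
      (((y-1:ℤ):ℂ)) * ((fun M : Matrix (Fin 2) (Fin 2) ℂ => M 0 0 - M 1 1)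
          (Pmat θ0 θ1 * owalk θ0 θ1 p t y * (Pmat θ0 θ1)ᴴ))
        + (((y+1:ℤ):ℂ)) * ((fun M : Matrix (Fin 2) (Fin 2) ℂ => M 0 0 - M 1 1)
          (Qmat θ0 θ1 * owalk θ0 θ1 p t y * (Qmat θ0 θ1)ᴴ))
      = -(c0^2 + (s0*s1)^2 - (s0*c1)^2) * ((y:ℂ) * ((owalk θ0 θ1 p t y) 0 0 - (owalk θ0 θ1 p t y) 1 1))
        + 2*((s0*s1)*(s0*c1)) * ((y:ℂ) * ((owalk θ0 θ1 p t y) 0 1 + (owalk θ0 θ1 p t y) 1 0))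
        + ((s0*s1)^2 + (s0*c1)^2 - c0^2) * (owalk θ0 θ1 p t y).trace := by
    intro y _
    have := ptw2 θ0 θ1 (owalk θ0 θ1 p t y) (y:ℂ)
    push_cast [-Complex.ofReal_cos, -Complex.ofReal_sin]
    exact this
  rw [Finset.sum_congr rfl hpt, Finset.sum_add_distrib, Finset.sum_add_distrib,
    ← Finset.mul_sum, ← Finset.mul_sum, ← Finset.mul_sum]
  rfl

lemma Vs_succ (t : ℕ) : Vs θ0 θ1 p (t+1)
    = 2*(c0*(s0*c1)) * Us θ0 θ1 p t
      + 2*(c0*(s0*s1)) * Vs θ0 θ1 p t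
      + (2*(c0*(s0*c1))) * trS θ0 θ1 p t := by
  have h0 : Vs θ0 θ1 p (t+1)
      = ∑ x ∈ Finset.Icc (-((t+1:ℕ):ℤ)) ((t+1:ℕ):ℤ),
          (x:ℂ) * ((fun M : Matrix (Fin 2) (Fin 2) ℂ => M 0 1 + M 1 0) (owalk θ0 θ1 p (t+1) x)) := rfl
  rw [h0, step_sum θ0 θ1 p t (fun x : ℤ => (x:ℂ))
      (fun M => M 0 1 + M 1 0) (by intro A B; simp [Matrix.add_apply]; ring) (by simp)]
  have hpt : ∀ y ∈ Finset.Icc (-(t:ℤ)) (t:ℤ),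
      (((y-1:ℤ):ℂ)) * ((fun M : Matrix (Fin 2) (Fin 2) ℂ => M 0 1 + M 1 0)
          (Pmat θ0 θ1 * owalk θ0 θ1 p t y * (Pmat θ0 θ1)ᴴ))
        + (((y+1:ℤ):ℂ)) * ((fun M : Matrix (Fin 2) (Fin 2) ℂ => M 0 1 + M 1 0)
          (Qmat θ0 θ1 * owalk θ0 θ1 p t y * (Qmat θ0 θ1)ᴴ))
      = 2*(c0*(s0*c1)) * ((y:ℂ) * ((owalk θ0 θ1 p t y) 0 0 - (owalk θ0 θ1 p t y) 1 1))
        + 2*(c0*(s0*s1)) * ((y:ℂ) * ((owalk θ0 θ1 p t y) 0 1 + (owalk θ0 θ1 p t y) 1 0))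
        + (2*(c0*(s0*c1))) * (owalk θ0 θ1 p t y).trace := by
    intro y _
    have := ptw3 θ0 θ1 (owalk θ0 θ1 p t y) (y:ℂ)
    push_cast [-Complex.ofReal_cos, -Complex.ofReal_sin]
    exact this
  rw [Finset.sum_congr rfl hpt, Finset.sum_add_distrib, Finset.sum_add_distrib,
    ← Finset.mul_sum, ← Finset.mul_sum, ← Finset.mul_sum]
  rfl

lemma T2s_succ (t : ℕ) : T2s θ0 θ1 p (t+1)
    = T2s θ0 θ1 p t
      + 2*(c0^2 + (s0*c1)^2 - (s0*s1)^2) * Us θ0 θ1 p t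
      + 4*((s0*s1)*(s0*c1)) * Vs θ0 θ1 p t
      + trS θ0 θ1 p t := by
  have h0 : T2s θ0 θ1 p (t+1)
      = ∑ x ∈ Finset.Icc (-((t+1:ℕ):ℤ)) ((t+1:ℕ):ℤ),
          (x:ℂ)^2 * (Matrix.trace (owalk θ0 θ1 p (t+1) x)) := rfl
  have h1 : ∀ x : ℤ, ((x:ℂ))^2 * (Matrix.trace (owalk θ0 θ1 p (t+1) x))
      = ((fun z : ℤ => ((z:ℂ))^2) x) * (Matrix.trace (owalk θ0 θ1 p (t+1) x)) := fun _ => rfl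
  rw [h0, Finset.sum_congr rfl (fun x _ => h1 x),
    step_sum θ0 θ1 p t (fun x : ℤ => ((x:ℂ))^2) Matrix.trace (by simp) (by simp)]
  have hpt : ∀ y ∈ Finset.Icc (-(t:ℤ)) (t:ℤ),
      (((y-1:ℤ):ℂ))^2 * (Matrix.trace (Pmat θ0 θ1 * owalk θ0 θ1 p t y * (Pmat θ0 θ1)ᴴ))
        + (((y+1:ℤ):ℂ))^2 * (Matrix.trace (Qmat θ0 θ1 * owalk θ0 θ1 p t y * (Qmat θ0 θ1)ᴴ))
      = (y:ℂ)^2 * (owalk θ0 θ1 p t y).trace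
        + 2*(c0^2 + (s0*c1)^2 - (s0*s1)^2) * ((y:ℂ) * ((owalk θ0 θ1 p t y) 0 0 - (owalk θ0 θ1 p t y) 1 1))
        + 4*((s0*s1)*(s0*c1)) * ((y:ℂ) * ((owalk θ0 θ1 p t y) 0 1 + (owalk θ0 θ1 p t y) 1 0))
        + (owalk θ0 θ1 p t y).trace := by
    intro y _
    have := ptw4 θ0 θ1 (owalk θ0 θ1 p t y) (y:ℂ)
    push_cast [-Complex.ofReal_cos, -Complex.ofReal_sin]
    exact this
  rw [Finset.sum_congr rfl hpt, Finset.sum_add_distrib, Finset.sum_add_distrib,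
    Finset.sum_add_distrib, ← Finset.mul_sum, ← Finset.mul_sum]
  rfl

lemma Us_zero : Us θ0 θ1 p 0 = 0 := by simp [Us]
lemma Vs_zero : Vs θ0 θ1 p 0 = 0 := by simp [Vs]
lemma T2s_zero : T2s θ0 θ1 p 0 = 0 := by simp [T2s]

lemma moment2_eq (t : ℕ) : moment2 θ0 θ1 p t = (T2s θ0 θ1 p t).re := by
  rw [T2s, Complex.re_sum, moment2]
  refine Finset.sum_congr rfl fun x _ => ?_
  rw [findprob]
  have : ((x:ℂ))^2 = (((x:ℝ)^2 : ℝ) : ℂ) := by push_cast; ring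
  rw [this, Complex.re_ofReal_mul]

end rec

lemma tendsto_zero_of_linRec (e : ℕ → ℝ) (τ δ : ℝ) (l1 l2 : ℂ)
    (hrec : ∀ t, e (t+2) = τ * e (t+1) - δ * e t)
    (hsum : l1 + l2 = (τ:ℂ)) (hprod : l1 * l2 = (δ:ℂ))
    (h1 : ‖l1‖ < 1) (h2 : ‖l2‖ < 1) :
    Tendsto e atTop (nhds 0) := by
  set E : ℕ → ℂ := fun t => (e t : ℂ) with hE
  set f : ℕ → ℂ := fun t => E (t+1) - l2 * E t with hfdef
  have hfstep : ∀ t, f (t+1) = l1 * f t := by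
    intro t
    have hc : (e (t+2) : ℂ) = (τ:ℂ) * (e (t+1):ℂ) - (δ:ℂ) * (e t:ℂ) := by
      have := congrArg (Complex.ofReal) (hrec t); push_cast at this ⊢; exact this
    show (e (t+2):ℂ) - l2 * (e (t+1):ℂ) = l1 * ((e (t+1):ℂ) - l2*(e t:ℂ))
    linear_combination hc - (e (t+1):ℂ) * hsum + (e t:ℂ) * hprod
  have hf : ∀ t, f t = l1^t * f 0 := by
    intro t
    induction t with
    | zero => simp
    | succ t ih => rw [hfstep t, ih]; ring
  set r : ℝ := max (max ‖l1‖ ‖l2‖) (1/2) with hrdef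
  have hr0 : 0 < r := lt_of_lt_of_le (by norm_num) (le_max_right _ _)
  have hr1 : r < 1 := by
    apply max_lt (max_lt h1 h2) (by norm_num)
  have hl1r : ‖l1‖ ≤ r := le_trans (le_max_left _ _) (le_max_left _ _)
  have hl2r : ‖l2‖ ≤ r := le_trans (le_max_right _ _) (le_max_left _ _)
  set c : ℝ := ‖f 0‖ / r with hcdef
  have hfr : ‖f 0‖ = c * r := (div_mul_cancel₀ _ hr0.ne').symm
  have key : ∀ t, ‖E t‖ ≤ (‖E 0‖ + t * c) * r ^ t := by
    intro t
    induction t with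
    | zero => simp
    | succ t ih =>
      have hEstep : E (t+1) = l2 * E t + f t := by simp [hfdef]
      have hft : ‖f t‖ ≤ r^t * ‖f 0‖ := by
        rw [hf t, norm_mul, norm_pow]
        exact mul_le_mul_of_nonneg_right (pow_le_pow_left₀ (norm_nonneg _) hl1r t)
          (norm_nonneg _)
      have h0 : ‖E (t+1)‖ ≤ ‖l2‖ * ‖E t‖ + ‖f t‖ := by
        rw [hEstep]; exact le_trans (norm_add_le _ _) (by rw [norm_mul])
      have h2' : ‖l2‖ * ‖E t‖ ≤ r * ((‖E 0‖ + t * c) * r ^ t) :=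
        mul_le_mul hl2r ih (norm_nonneg _) hr0.le
      calc ‖E (t+1)‖ ≤ r * ((‖E 0‖ + t * c) * r ^ t) + r^t * ‖f 0‖ := by
            refine le_trans h0 (add_le_add h2' hft)
        _ = (‖E 0‖ + ((t+1 : ℕ) : ℝ) * c) * r ^ (t+1) := by
            rw [hfr]; push_cast; ring
  have hbound : Tendsto (fun t : ℕ => (‖E 0‖ + t * c) * r ^ t) atTop (nhds 0) := by
    have habs : ‖r‖ < 1 := by rwa [Real.norm_eq_abs, abs_of_pos hr0]
    have hsummable := summable_pow_mul_geometric_of_norm_lt_one 1 habs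
    have htr : Tendsto (fun t : ℕ => (t:ℝ) * r ^ t) atTop (nhds 0) := by
      have := hsummable.tendsto_atTop_zero
      simpa using this
    have hgeo : Tendsto (fun t : ℕ => r ^ t) atTop (nhds 0) :=
      tendsto_pow_atTop_nhds_zero_of_lt_one hr0.le hr1
    have h3 : Tendsto (fun t : ℕ => ‖E 0‖ * r ^ t + c * ((t:ℝ) * r ^ t)) atTop
        (nhds (‖E 0‖ * 0 + c * 0)) :=
      ((hgeo.const_mul _).add (htr.const_mul _))
    simp only [mul_zero, add_zero] at h3
    refine h3.congr fun t => by ring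
  refine squeeze_zero_norm (fun t => ?_) hbound
  have : ‖e t‖ = ‖E t‖ := by simp [hE]
  rw [this]; exact key t

lemma exists_roots (τ δ : ℝ) (hq1 : 0 < 1 - τ + δ) (hqm1 : 0 < 1 + τ + δ) (hδ : δ < 1) :
    ∃ l1 l2 : ℂ, l1 + l2 = (τ:ℂ) ∧ l1 * l2 = (δ:ℂ) ∧ ‖l1‖ < 1 ∧ ‖l2‖ < 1 := by
  have hδm1 : -1 < δ := by linarith
  have hτ2 : τ < 2 := by linarith
  have hτm2 : -2 < τ := by linarith
  by_cases hΔ : 0 ≤ τ^2 - 4*δ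
  · set s := Real.sqrt (τ^2 - 4*δ) with hs
    have hs0 : 0 ≤ s := Real.sqrt_nonneg _
    have hs2 : s^2 = τ^2 - 4*δ := Real.sq_sqrt hΔ
    have hsub : s < 2 - τ := by
      rw [hs, Real.sqrt_lt' (by linarith)]; nlinarith
    have hsub2 : s < 2 + τ := by
      rw [hs, Real.sqrt_lt' (by linarith)]; nlinarith
    refine ⟨(((τ+s)/2 : ℝ) : ℂ), (((τ-s)/2 : ℝ) : ℂ), ?_, ?_, ?_, ?_⟩
    · push_cast; ring
    · have : ((τ+s)/2) * ((τ-s)/2) = δ := by nlinarith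
      rw [← Complex.ofReal_mul, this]
    · rw [Complex.norm_real, Real.norm_eq_abs, abs_lt]; constructor <;> nlinarith
    · rw [Complex.norm_real, Real.norm_eq_abs, abs_lt]; constructor <;> nlinarith
  · push_neg at hΔ
    set s := Real.sqrt (4*δ - τ^2) with hs
    have hs2 : s^2 = 4*δ - τ^2 := Real.sq_sqrt (by linarith)
    refine ⟨((τ/2 : ℝ) : ℂ) + ((s/2 : ℝ) : ℂ) * I, ((τ/2 : ℝ) : ℂ) + ((-(s/2) : ℝ) : ℂ) * I,
      ?_, ?_, ?_, ?_⟩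
    · push_cast; ring
    · have h1 : (((τ/2 : ℝ) : ℂ) + ((s/2 : ℝ) : ℂ) * I) * (((τ/2 : ℝ) : ℂ) + ((-(s/2) : ℝ) : ℂ) * I)
          = ((τ/2 : ℝ) : ℂ)^2 - (((s/2 : ℝ) : ℂ))^2 * I^2 := by push_cast; ring
      rw [h1, Complex.I_sq]
      have : (τ/2)^2 + (s/2)^2 = δ := by nlinarith
      push_cast [← this]; ring
    · have hn : ‖((τ/2 : ℝ) : ℂ) + ((s/2 : ℝ) : ℂ) * I‖^2 = (τ/2)^2 + (s/2)^2 := by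
        rw [Complex.sq_norm, Complex.normSq_add_mul_I]
      have hd : (τ/2)^2 + (s/2)^2 = δ := by nlinarith
      nlinarith [norm_nonneg (((τ/2 : ℝ) : ℂ) + ((s/2 : ℝ) : ℂ) * I)]
    · have hn : ‖((τ/2 : ℝ) : ℂ) + ((-(s/2) : ℝ) : ℂ) * I‖^2 = (τ/2)^2 + (-(s/2))^2 := by
        rw [Complex.sq_norm, Complex.normSq_add_mul_I]
      have hd : (τ/2)^2 + (-(s/2))^2 = δ := by nlinarith
      nlinarith [norm_nonneg (((τ/2 : ℝ) : ℂ) + ((-(s/2) : ℝ) : ℂ) * I)]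
theorem owalk_moment2_over_t_limit (θ0 θ1 p : ℝ) (hp0 : 0 ≤ p) (hp1 : p ≤ 1)
    (hne : Real.cos θ0 ≠ Real.sin θ0 * Real.sin θ1)
    (hsc : Real.sin θ0 * Real.cos θ1 ≠ 0) (hc0 : Real.cos θ0 ≠ 0) :
    Filter.Tendsto (fun t : ℕ => moment2 θ0 θ1 p t / (t : ℝ)) Filter.atTop
      (nhds (Real.sin θ0 ^ 2 *
        (Real.cos θ1 ^ 2 + 4 * Real.cos θ0 ^ 2 * Real.sin θ1 ^ 2
          + 4 * Real.cos θ0 * Real.sin θ0 * Real.sin θ1 *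
            (Real.cos θ1 ^ 2 - 2 * Real.cos θ0 ^ 2 * Real.sin θ1 ^ 2)) /
        (Real.cos θ0 - Real.sin θ0 * Real.sin θ1) ^ 2)) := by
  -- abbreviations
  set a : ℝ := Real.cos θ0 with ha
  set b : ℝ := Real.sin θ0 * Real.sin θ1 with hb
  set c : ℝ := Real.sin θ0 * Real.cos θ1 with hc
  have hpy : a^2 + b^2 + c^2 = 1 := by
    rw [ha, hb, hc]
    have h0 := Real.sin_sq_add_cos_sq θ0
    have h1 := Real.sin_sq_add_cos_sq θ1
    linear_combination h0 + Real.sin θ0^2 * h1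
  have hab : a - b ≠ 0 := sub_ne_zero.mpr hne
  have hc2pos : 0 < c^2 := by positivity
  set K : ℝ := a^2 + b^2 - c^2 with hK
  set L : ℝ := a^2 + c^2 - b^2 with hL
  set G : ℝ := b*c with hG
  set g : ℝ := a*c with hg
  set h : ℝ := a*b with hh
  set vb1 : ℝ := b^2 + c^2 - a^2 with hvb1
  set τ : ℝ := 2*h - K with hτ
  set δ : ℝ := -(4*G*g + 2*h*K) with hδ
  -- real sequences
  set u : ℕ → ℝ := fun t => (Us θ0 θ1 p t).re with hu
  set v : ℕ → ℝ := fun t => (Vs θ0 θ1 p t).re with hv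
  -- real recurrences
  have hUrec : ∀ t, u (t+1) = -K * u t + 2*G * v t + vb1 := by
    intro t
    have h1 := Us_succ θ0 θ1 p t
    rw [trS_eq_one] at h1
    have h2 : Us θ0 θ1 p (t+1)
        = ((-K : ℝ):ℂ) * Us θ0 θ1 p t + ((2*G : ℝ):ℂ) * Vs θ0 θ1 p t + ((vb1:ℝ):ℂ) := by
      rw [h1, hK, hG, hvb1, ha, hb, hc]
      push_cast [-Complex.ofReal_cos, -Complex.ofReal_sin]
      ring
    show (Us θ0 θ1 p (t+1)).re = _
    rw [h2]
    simp [Complex.add_re, Complex.re_ofReal_mul, Complex.ofReal_re]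
    rfl
  have hVrec : ∀ t, v (t+1) = 2*g * u t + 2*h * v t + 2*g := by
    intro t
    have h1 := Vs_succ θ0 θ1 p t
    rw [trS_eq_one] at h1
    have h2 : Vs θ0 θ1 p (t+1)
        = ((2*g : ℝ):ℂ) * Us θ0 θ1 p t + ((2*h : ℝ):ℂ) * Vs θ0 θ1 p t + ((2*g:ℝ):ℂ) := by
      rw [h1, hg, hh, ha, hb, hc]
      push_cast [-Complex.ofReal_cos, -Complex.ofReal_sin]
      ring
    show (Vs θ0 θ1 p (t+1)).re = _
    rw [h2]
    simp [Complex.add_re, Complex.re_ofReal_mul, Complex.ofReal_re]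
    rfl
  have hMrec : ∀ t, moment2 θ0 θ1 p (t+1)
      = moment2 θ0 θ1 p t + (1 + 2*L * u t + 4*G * v t) := by
    intro t
    have h1 := T2s_succ θ0 θ1 p t
    rw [trS_eq_one] at h1
    have h2 : T2s θ0 θ1 p (t+1)
        = T2s θ0 θ1 p t + ((2*L : ℝ):ℂ) * Us θ0 θ1 p t + ((4*G : ℝ):ℂ) * Vs θ0 θ1 p t
          + ((1:ℝ):ℂ) := by
      rw [h1, hL, hG, ha, hb, hc]
      push_cast [-Complex.ofReal_cos, -Complex.ofReal_sin]
      ring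
    rw [moment2_eq, moment2_eq, h2]
    simp [Complex.add_re, Complex.re_ofReal_mul, Complex.ofReal_re]
    ring
  have hM0 : moment2 θ0 θ1 p 0 = 0 := by
    rw [moment2_eq, T2s_zero]; simp
  have hu0 : u 0 = 0 := by rw [hu]; simp [Us_zero]
  have hv0 : v 0 = 0 := by rw [hv]; simp [Vs_zero]
  -- fixed point
  set D0 : ℝ := (1+K)*(1-2*h) - 4*G*g with hD0def
  have hD0 : D0 = 2*(a-b)^2 := by
    rw [hD0def, hK, hG, hg, hh]
    linear_combination (-(1+2*a*b)) * hpy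
  have hD0ne : D0 ≠ 0 := by rw [hD0]; positivity
  set nu : ℝ := (1-2*h)*vb1 + 2*G*(2*g) with hnu
  set nv : ℝ := 2*g*vb1 + (1+K)*(2*g) with hnv
  set wu : ℝ := nu / D0 with hwu
  set wv : ℝ := nv / D0 with hwv
  have hwufix : wu = -K*wu + 2*G*wv + vb1 := by
    rw [hwu, hwv]
    field_simp
    rw [hnu, hnv, hD0def]
    ring
  have hwvfix : wv = 2*g*wu + 2*h*wv + 2*g := by
    rw [hwu, hwv]
    field_simp
    rw [hnu, hnv, hD0def]
    ring
  -- error sequences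
  set eu : ℕ → ℝ := fun t => u t - wu with heu
  set ev : ℕ → ℝ := fun t => v t - wv with hev
  have heu1 : ∀ t, eu (t+1) = -K * eu t + 2*G * ev t := by
    intro t
    show u (t+1) - wu = -K * (u t - wu) + 2*G * (v t - wv)
    linear_combination hUrec t - hwufix
  have hev1 : ∀ t, ev (t+1) = 2*g * eu t + 2*h * ev t := by
    intro t
    show v (t+1) - wv = 2*g * (u t - wu) + 2*h * (v t - wv)
    linear_combination hVrec t - hwvfix
  have heu2 : ∀ t, eu (t+2) = τ * eu (t+1) - δ * eu t := by
    intro t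
    rw [hτ, hδ]
    linear_combination heu1 (t+1) + (2*G) * hev1 t - (2*h) * heu1 t
  have hev2 : ∀ t, ev (t+2) = τ * ev (t+1) - δ * ev t := by
    intro t
    rw [hτ, hδ]
    linear_combination hev1 (t+1) + (2*g) * heu1 t + K * hev1 t
  -- roots of the characteristic polynomial
  have hq1 : 0 < 1 - τ + δ := by
    have : 1 - τ + δ = D0 := by rw [hτ, hδ, hD0def]; ring
    rw [this, hD0]; positivity
  have hqm1 : 0 < 1 + τ + δ := by
    have : 1 + τ + δ = 2*c^2 := by
      rw [hτ, hδ, hK, hG, hg, hh]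
      linear_combination (-(1+2*a*b)) * hpy
    rw [this]; positivity
  have hδ1 : δ < 1 := by
    have hδeq : δ = -2*a*b := by
      rw [hδ, hK, hG, hg, hh]
      linear_combination (-2*a*b) * hpy
    nlinarith [sq_nonneg (a+b)]
  obtain ⟨l1, l2, hsum, hprod, hn1, hn2⟩ := exists_roots τ δ hq1 hqm1 hδ1
  -- convergence of u and v
  have heuT : Filter.Tendsto eu Filter.atTop (nhds 0) :=
    tendsto_zero_of_linRec eu τ δ l1 l2 heu2 hsum hprod hn1 hn2
  have hevT : Filter.Tendsto ev Filter.atTop (nhds 0) :=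
    tendsto_zero_of_linRec ev τ δ l1 l2 hev2 hsum hprod hn1 hn2
  have huT : Filter.Tendsto u Filter.atTop (nhds wu) := by
    have := heuT.add_const wu
    simp only [heu, zero_add, sub_add_cancel] at this
    exact this
  have hvT : Filter.Tendsto v Filter.atTop (nhds wv) := by
    have := hevT.add_const wv
    simp only [hev, zero_add, sub_add_cancel] at this
    exact this
  -- the Cesàro argument
  set z : ℕ → ℝ := fun t => 1 + 2*L * u t + 4*G * v t with hz
  set α : ℝ := 1 + 2*L * wu + 4*G * wv with hα
  have hzT : Filter.Tendsto z Filter.atTop (nhds α) := by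
    rw [hα]
    exact (tendsto_const_nhds.add (huT.const_mul _)).add (hvT.const_mul _)
  have hmsum : ∀ t, moment2 θ0 θ1 p t = ∑ k ∈ Finset.range t, z k := by
    intro t
    induction t with
    | zero => simpa using hM0
    | succ t ih => rw [Finset.sum_range_succ, ← ih, hMrec t]
  have hces := hzT.cesaro
  have hfinal : Filter.Tendsto (fun t : ℕ => moment2 θ0 θ1 p t / (t:ℝ))
      Filter.atTop (nhds α) := by
    refine hces.congr fun t => ?_
    rw [hmsum t, div_eq_inv_mul]
  -- identify the limit
  have hval : α = Real.sin θ0 ^ 2 *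
        (Real.cos θ1 ^ 2 + 4 * Real.cos θ0 ^ 2 * Real.sin θ1 ^ 2
          + 4 * Real.cos θ0 * Real.sin θ0 * Real.sin θ1 *
            (Real.cos θ1 ^ 2 - 2 * Real.cos θ0 ^ 2 * Real.sin θ1 ^ 2)) /
        (Real.cos θ0 - Real.sin θ0 * Real.sin θ1) ^ 2 := by
    have htar : Real.sin θ0 ^ 2 *
        (Real.cos θ1 ^ 2 + 4 * Real.cos θ0 ^ 2 * Real.sin θ1 ^ 2
          + 4 * Real.cos θ0 * Real.sin θ0 * Real.sin θ1 *
            (Real.cos θ1 ^ 2 - 2 * Real.cos θ0 ^ 2 * Real.sin θ1 ^ 2)) /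
        (Real.cos θ0 - Real.sin θ0 * Real.sin θ1) ^ 2
        = (c^2 + 4*a^2*b^2 + 4*a*b*(c^2 - 2*a^2*b^2)) / (a-b)^2 := by
      rw [ha, hb, hc]; ring
    rw [htar, hα, hwu, hwv]
    have hsingle : 1 + 2*L * (nu/D0) + 4*G * (nv/D0) = (D0 + 2*L*nu + 4*G*nv) / D0 := by
      field_simp
    rw [hsingle, div_eq_div_iff hD0ne (pow_ne_zero 2 hab)]
    simp only [hD0def, hnu, hnv, hK, hL, hG, hg, hh, hvb1]
    linear_combination (c^2 - b^2 + 2*b^2*c^2 - 2*b^4 + 2*a*b + 2*a*b*c^2 + 6*a*b^3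
      + 4*a*b^3*c^2 + 4*a*b^5 - a^2 + 2*a^2*c^2 - 4*a^2*b^2 - 8*a^2*b^4 + 6*a^3*b
      + 4*a^3*b*c^2 + 8*a^3*b^3 - 2*a^4 - 8*a^4*b^2 - 16*a^4*b^4 + 4*a^5*b) * hpy
  rw [← hval]
  exact hfinal
end

section
/- For all k ∈ ℝ and λ ∈ ℂ, the characteristic polynomial of Û(k) factors as det(Û(k) − λ·I₄) = (λ + 2·c0·s0·s1·cos k) · (λ³ − 2·s0·(s0·c1² + c0·s1)·(cos k)·λ² + (4·c0·s0²·s1·(s0·c1² + c0·s1)·sin²k + 2·s0²·c1² − 1)·λ + 2·c0·s0·s1·(1 − 4·c0²·s0²·s1²·sin²k)·cos k). -/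
open Matrix Complex

/-- The matrix `A` built from `P(θ0,θ1)`. -/
noncomputable def Amat (θ0 θ1 : ℝ) : Matrix (Fin 4) (Fin 4) ℂ :=
  !![0, 0, 0, (Real.cos θ0 : ℂ);
     0, (-((Real.sin θ0 * Real.cos θ1 : ℝ) : ℂ)), ((Real.sin θ0 * Real.sin θ1 : ℝ) : ℂ), 0;
     ((Real.sin θ0 * Real.sin θ1 : ℝ) : ℂ), 0, 0, (-((Real.sin θ0 * Real.cos θ1 : ℝ) : ℂ));
     0, (Real.cos θ0 : ℂ), 0, 0]

/-- The matrix `B` built from `Q(θ0,θ1)`. -/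
noncomputable def Bmat (θ0 θ1 : ℝ) : Matrix (Fin 4) (Fin 4) ℂ :=
  !![((Real.sin θ0 * Real.cos θ1 : ℝ) : ℂ), 0, 0, ((Real.sin θ0 * Real.sin θ1 : ℝ) : ℂ);
     0, 0, (Real.cos θ0 : ℂ), 0;
     (Real.cos θ0 : ℂ), 0, 0, 0;
     0, ((Real.sin θ0 * Real.sin θ1 : ℝ) : ℂ), ((Real.sin θ0 * Real.cos θ1 : ℝ) : ℂ), 0]

/-- The Fourier-space evolution operator `Û(k) = e^{ik} A² + e^{-ik} B²`. -/
noncomputable def Uhat (θ0 θ1 k : ℝ) : Matrix (Fin 4) (Fin 4) ℂ :=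
  Complex.exp (Complex.I * (k : ℂ)) • (Amat θ0 θ1 ^ 2)
    + Complex.exp (-(Complex.I * (k : ℂ))) • (Bmat θ0 θ1 ^ 2)

lemma det_fin_four' (M : Matrix (Fin 4) (Fin 4) ℂ) :
    M.det =
      M 0 0 * (M 1 1 * (M 2 2 * M 3 3 - M 2 3 * M 3 2) - M 1 2 * (M 2 1 * M 3 3 - M 2 3 * M 3 1)
        + M 1 3 * (M 2 1 * M 3 2 - M 2 2 * M 3 1))
      - M 0 1 * (M 1 0 * (M 2 2 * M 3 3 - M 2 3 * M 3 2) - M 1 2 * (M 2 0 * M 3 3 - M 2 3 * M 3 0)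
        + M 1 3 * (M 2 0 * M 3 2 - M 2 2 * M 3 0))
      + M 0 2 * (M 1 0 * (M 2 1 * M 3 3 - M 2 3 * M 3 1) - M 1 1 * (M 2 0 * M 3 3 - M 2 3 * M 3 0)
        + M 1 3 * (M 2 0 * M 3 1 - M 2 1 * M 3 0))
      - M 0 3 * (M 1 0 * (M 2 1 * M 3 2 - M 2 2 * M 3 1) - M 1 1 * (M 2 0 * M 3 2 - M 2 2 * M 3 0)
        + M 1 2 * (M 2 0 * M 3 1 - M 2 1 * M 3 0)) := by
  rw [Matrix.det_succ_row_zero, Fin.sum_univ_four]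
  simp only [Fin.val_zero, Fin.val_one, Fin.val_two,
    show ((3:Fin 4):ℕ) = 3 from rfl, pow_zero, pow_one,
    Matrix.submatrix_apply, Matrix.det_fin_three,
    show ((0:Fin 4).succAbove 0) = 1 from rfl, show ((0:Fin 4).succAbove 1) = 2 from rfl,
    show ((0:Fin 4).succAbove 2) = 3 from rfl,
    show ((1:Fin 4).succAbove 0) = 0 from rfl, show ((1:Fin 4).succAbove 1) = 2 from rfl,
    show ((1:Fin 4).succAbove 2) = 3 from rfl,
    show ((2:Fin 4).succAbove 0) = 0 from rfl, show ((2:Fin 4).succAbove 1) = 1 from rfl,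
    show ((2:Fin 4).succAbove 2) = 3 from rfl,
    show ((3:Fin 4).succAbove 0) = 0 from rfl, show ((3:Fin 4).succAbove 1) = 1 from rfl,
    show ((3:Fin 4).succAbove 2) = 2 from rfl,
    show (Fin.succ (0:Fin 3)) = (1:Fin 4) from rfl,
    show (Fin.succ (1:Fin 3)) = (2:Fin 4) from rfl,
    show (Fin.succ (2:Fin 3)) = (3:Fin 4) from rfl]
  ring

set_option maxHeartbeats 4000000 in
set_option maxRecDepth 20000 in
theorem Uhat_charpoly_factorization (θ0 θ1 : ℝ) (c0 s0 c1 s1 : ℝ)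
    (hc0 : c0 = Real.cos θ0) (hs0 : s0 = Real.sin θ0)
    (hc1 : c1 = Real.cos θ1) (hs1 : s1 = Real.sin θ1) :
    ∀ (k : ℝ) (lam : ℂ),
      (Uhat θ0 θ1 k - lam • (1 : Matrix (Fin 4) (Fin 4) ℂ)).det =
        (lam + ((2 * c0 * s0 * s1 * Real.cos k : ℝ) : ℂ)) *
          (lam ^ 3
            - ((2 * s0 * (s0 * c1 ^ 2 + c0 * s1) * Real.cos k : ℝ) : ℂ) * lam ^ 2
            + ((4 * c0 * s0 ^ 2 * s1 * (s0 * c1 ^ 2 + c0 * s1) * Real.sin k ^ 2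
                  + 2 * s0 ^ 2 * c1 ^ 2 - 1 : ℝ) : ℂ) * lam
            + ((2 * c0 * s0 * s1 * (1 - 4 * c0 ^ 2 * s0 ^ 2 * s1 ^ 2 * Real.sin k ^ 2)
                  * Real.cos k : ℝ) : ℂ)) := by
  intro k lam
  subst hc0 hs0 hc1 hs1
  have ha : (Complex.sin θ0)^2 + (Complex.cos θ0)^2 = 1 := Complex.sin_sq_add_cos_sq θ0
  have hc : (Complex.sin θ1)^2 + (Complex.cos θ1)^2 = 1 := Complex.sin_sq_add_cos_sq θ1
  have hy : (Complex.sin k)^2 + (Complex.cos k)^2 = 1 := Complex.sin_sq_add_cos_sq k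
  have hi : (Complex.I)^2 = -1 := Complex.I_sq
  have he1 : Complex.exp (Complex.I * (k:ℂ)) = Complex.cos k + Complex.sin k * Complex.I := by
    rw [mul_comm, Complex.exp_mul_I]
  have he2 : Complex.exp (-(Complex.I * (k:ℂ))) = Complex.cos k - Complex.sin k * Complex.I := by
    rw [show -(Complex.I * (k:ℂ)) = (-(k:ℂ)) * Complex.I by ring, Complex.exp_mul_I,
      Complex.cos_neg, Complex.sin_neg]
    ring
  rw [det_fin_four']
  simp [Uhat, Amat, Bmat, pow_two, Matrix.mul_apply, Fin.sum_univ_four, he1, he2,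
    Complex.ofReal_mul]
  set a : ℂ := Complex.sin θ0 with hadef
  set b : ℂ := Complex.cos θ0 with hbdef
  set c : ℂ := Complex.sin θ1 with hcdef
  set d : ℂ := Complex.cos θ1 with hddef
  set x : ℂ := Complex.cos k with hxdef
  set y : ℂ := Complex.sin k with hydef
  set L : ℂ := lam with hLdef
  set i : ℂ := Complex.I with hidef
  linear_combination ((1)*b^4*y^2*L^2 + (-2)*a^2*b^2*c^2*y^2*L^2 + (-4)*a^2*b^6*c^2*x^2*y^2 + (-4)*a^3*b*c*d^2*y^2*L^2 + (-4)*a^3*b^3*c*d^2*x*y^2*L + (-1)*a^4*d^4*y^2*L^2 + (1)*a^4*c^4*y^2*L^2 + (-8)*a^4*b^2*c^2*d^2*x*y^2*L + (-8)*a^4*b^4*c^2*d^2*x^2*y^2 + (8)*a^4*b^4*c^4*x^2*y^2 + (-4)*a^5*b*c*d^4*x*y^2*L + (-4)*a^5*b*c^3*d^2*x*y^2*L + (-4)*a^6*b^2*c^2*d^4*x^2*y^2 + (-8)*a^6*b^2*c^4*d^2*x^2*y^2 + (-4)*a^6*b^2*c^6*x^2*y^2) * hi + ((-2)*d^2*L^2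 + (1)*d^4*y^2*L^2 + (1)*d^4*x^2*L^2 + (-1)*c^4*y^2*L^2 + (-1)*c^4*x^2*L^2 + (-1)*b^2*d^4*y^2*L^2 + (-1)*b^2*d^4*x^2*L^2 + (-2)*b^2*c^2*y^2*L^2 + (-4)*b^2*c^2*x^2 + (-2)*b^2*c^2*x^2*L^2 + (4)*b^2*c^2*d^4*x^2*y^2 + (4)*b^2*c^2*d^4*x^4 + (1)*b^2*c^4*y^2*L^2 + (1)*b^2*c^4*x^2*L^2 + (8)*b^2*c^4*d^2*x^2*y^2 + (8)*b^2*c^4*d^2*x^4 + (4)*b^2*c^6*x^2*y^2 + (4)*b^2*c^6*x^4 + (8)*b^4*c^2*d^2*x^2*y^2 + (8)*b^4*c^2*d^2*x^4 + (-8)*b^4*c^2*d^4*x^2*y^2 + (-8)*b^4*c^2*d^4*x^4 + (8)*b^4*c^4*x^2*y^2 + (8)*b^4*c^4*x^4 + (-16)*b^4*c^4*d^2*x^2*y^2 + (-16)*b^4*c^4*d^2*x^4 + (-8)*b^4*c^6*x^2*y^2 + (-8)*b^4*c^6*x^4 + (4)*b^6*c^2*x^2*y^2 + (4)*b^6*c^2*x^4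 + (-8)*b^6*c^2*d^2*x^2*y^2 + (-8)*b^6*c^2*d^2*x^4 + (4)*b^6*c^2*d^4*x^2*y^2 + (4)*b^6*c^2*d^4*x^4 + (-8)*b^6*c^4*x^2*y^2 + (-8)*b^6*c^4*x^4 + (8)*b^6*c^4*d^2*x^2*y^2 + (8)*b^6*c^4*d^2*x^4 + (4)*b^6*c^6*x^2*y^2 + (4)*b^6*c^6*x^4 + (-4)*a*b*c*d^2*x*L + (4)*a*b*c*d^4*x*y^2*L + (4)*a*b*c*d^4*x^3*L + (4)*a*b*c^3*d^2*x*y^2*L + (4)*a*b*c^3*d^2*x^3*L + (4)*a*b^3*c*d^2*x*y^2*L + (4)*a*b^3*c*d^2*x^3*L + (-4)*a*b^3*c*d^4*x*y^2*L + (-4)*a*b^3*c*d^4*x^3*L + (-4)*a*b^3*c^3*d^2*x*y^2*L + (-4)*a*b^3*c^3*d^2*x^3*L + (1)*a^2*d^4*y^2*L^2 + (1)*a^2*d^4*x^2*L^2 + (-1)*a^2*c^4*y^2*L^2 + (-1)*a^2*c^4*x^2*L^2 + (4)*a^2*b^2*c^2*d^4*x^2*y^2 + (4)*a^2*b^2*c^2*d^4*x^4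 + (8)*a^2*b^2*c^4*d^2*x^2*y^2 + (8)*a^2*b^2*c^4*d^2*x^4 + (4)*a^2*b^2*c^6*x^2*y^2 + (4)*a^2*b^2*c^6*x^4 + (8)*a^2*b^4*c^2*d^2*x^2*y^2 + (8)*a^2*b^4*c^2*d^2*x^4 + (-4)*a^2*b^4*c^2*d^4*x^2*y^2 + (-4)*a^2*b^4*c^2*d^4*x^4 + (8)*a^2*b^4*c^4*x^2*y^2 + (8)*a^2*b^4*c^4*x^4 + (-8)*a^2*b^4*c^4*d^2*x^2*y^2 + (-8)*a^2*b^4*c^4*d^2*x^4 + (-4)*a^2*b^4*c^6*x^2*y^2 + (-4)*a^2*b^4*c^6*x^4 + (4)*a^3*b*c*d^4*x*y^2*L + (4)*a^3*b*c*d^4*x^3*L + (4)*a^3*b*c^3*d^2*x*y^2*L + (4)*a^3*b*c^3*d^2*x^3*L + (4)*a^4*b^2*c^2*d^4*x^2*y^2 + (4)*a^4*b^2*c^2*d^4*x^4 + (8)*a^4*b^2*c^4*d^2*x^2*y^2 + (8)*a^4*b^2*c^4*d^2*x^4 + (4)*a^4*b^2*c^6*x^2*y^2 + (4)*a^4*b^2*c^6*x^4)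 * ha + ((-1)*y^2*L^2 + (-1)*x^2*L^2 + (1)*d^2*y^2*L^2 + (1)*d^2*x^2*L^2 + (-1)*c^2*y^2*L^2 + (-1)*c^2*x^2*L^2 + (-4)*b^2*x^2 + (4)*b^2*x^2*y^2 + (4)*b^2*x^4 + (-2)*b^2*d^2*y^2*L^2 + (-2)*b^2*d^2*x^2*L^2 + (2)*b^2*c^2*y^2*L^2 + (2)*b^2*c^2*x^2*L^2 + (4)*b^2*c^2*x^2*y^2 + (4)*b^2*c^2*x^4 + (4)*b^2*c^2*d^2*x^2*y^2 + (4)*b^2*c^2*d^2*x^4 + (4)*b^2*c^4*x^2*y^2 + (4)*b^2*c^4*x^4 + (1)*b^4*y^2*L^2 + (4)*b^4*x^2 + (1)*b^4*x^2*L^2 + (-4)*b^4*x^2*y^2 + (-4)*b^4*x^4 + (1)*b^4*d^2*y^2*L^2 + (1)*b^4*d^2*x^2*L^2 + (-1)*b^4*c^2*y^2*L^2 + (-1)*b^4*c^2*x^2*L^2 + (-4)*b^4*c^2*x^2*y^2 + (-4)*b^4*c^2*x^4 + (-12)*b^4*c^2*d^2*x^2*y^2 + (-12)*b^4*c^2*d^2*x^4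 + (-12)*b^4*c^4*x^2*y^2 + (-12)*b^4*c^4*x^4 + (-4)*b^6*c^2*x^2*y^2 + (-4)*b^6*c^2*x^4 + (12)*b^6*c^2*d^2*x^2*y^2 + (12)*b^6*c^2*d^2*x^4 + (12)*b^6*c^4*x^2*y^2 + (12)*b^6*c^4*x^4 + (4)*b^8*c^2*x^2*y^2 + (4)*b^8*c^2*x^4 + (-4)*b^8*c^2*d^2*x^2*y^2 + (-4)*b^8*c^2*d^2*x^4 + (-4)*b^8*c^4*x^2*y^2 + (-4)*b^8*c^4*x^4 + (4)*a*b*c*d^2*x*y^2*L + (4)*a*b*c*d^2*x^3*L + (-8)*a*b^3*c*d^2*x*y^2*L + (-8)*a*b^3*c*d^2*x^3*L + (4)*a*b^5*c*d^2*x*y^2*L + (4)*a*b^5*c*d^2*x^3*L) * hc + ((-1)*L^2 + (2)*d^2*L^2 + (4)*b^2*x^2 + (-2)*b^2*d^2*L^2 + (-4)*b^2*d^2*x^2 + (-4)*b^4*x^2 + (4)*b^4*d^2*x^2 + (4)*a*b*c*d^2*x*L + (-4)*a*b^3*c*d^2*x*L) * hy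
end

section
/- For all real θ0, θ1, the matrix Û(0) has 1 as an eigenvalue: det(Û(0) − I₄) = 0. -/
open Matrix Complex

theorem Uhat_zero_has_eigenvalue_one (θ0 θ1 : ℝ) :
    (Uhat θ0 θ1 0 - (1 : Matrix (Fin 4) (Fin 4) ℂ)).det = 0 := by
  set c0 := (Real.cos θ0 : ℂ) with hc0
  set s0 := (Real.sin θ0 : ℂ) with hs0
  set c1 := (Real.cos θ1 : ℂ) with hc1
  set s1 := (Real.sin θ1 : ℂ) with hs1
  have h0 : c0 ^ 2 + s0 ^ 2 = 1 := by
    rw [hc0, hs0]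
    exact_mod_cast congrArg (Complex.ofReal) (Real.cos_sq_add_sin_sq θ0)
  have h1 : c1 ^ 2 + s1 ^ 2 = 1 := by
    rw [hc1, hs1]
    exact_mod_cast congrArg (Complex.ofReal) (Real.cos_sq_add_sin_sq θ1)
  set M := Uhat θ0 θ1 0 - (1 : Matrix (Fin 4) (Fin 4) ℂ) with hM
  clear_value M c0 s0 c1 s1
  have hz : ∀ j, M 0 j + (1 : ℂ) • M 1 j = 0 := by
    intro j
    have hMe : ∀ i j, M i j =
        (Uhat θ0 θ1 0) i j - (if i = j then 1 else 0) := by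
      intro i j
      simp [hM, Matrix.sub_apply, Matrix.one_apply]
    fin_cases j <;>
      simp [hMe, Uhat, Amat, Bmat, pow_two, Complex.ofReal_mul,
        ← hc0, ← hs0, ← hc1, ← hs1, Matrix.mul_apply, Fin.sum_univ_four]
    all_goals (first | ring1 | (linear_combination h0 + s0 ^ 2 * h1))
  have := Matrix.det_updateRow_add_smul_self M
    (show (0 : Fin 4) ≠ 1 by decide) (1 : ℂ)
  rw [← this]
  refine Matrix.det_eq_zero_of_row_eq_zero 0 fun j => ?_
  rw [Matrix.updateRow_self]
  simpa using hz j
end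

section
/- Suppose cos θ0 ≠ sin θ0 · sin θ1 and sin θ0 · cos θ1 ≠ 0. Then every complex root λ of the quadratic equation λ² − (s0²·c1² − (c0 − s0·s1)²)·λ − 2·c0·s0·s1 = 0 satisfies |λ| < 1, where c0 = cos θ0, s0 = sin θ0, c1 = cos θ1, s1 = sin θ1. -/
set_option maxHeartbeats 800000 in
theorem quadratic_roots_lt_one (θ0 θ1 : ℝ) (c0 s0 c1 s1 : ℝ)
    (hc0 : c0 = Real.cos θ0) (hs0 : s0 = Real.sin θ0)
    (hc1 : c1 = Real.cos θ1) (hs1 : s1 = Real.sin θ1)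
    (hne : c0 ≠ s0 * s1) (hsc : s0 * c1 ≠ 0) :
    ∀ lam : ℂ,
      lam ^ 2 - ((s0 ^ 2 * c1 ^ 2 - (c0 - s0 * s1) ^ 2 : ℝ) : ℂ) * lam
          - ((2 * c0 * s0 * s1 : ℝ) : ℂ) = 0 →
        ‖lam‖ < 1 := by
  have p0 : s0 ^ 2 + c0 ^ 2 = 1 := by rw [hs0, hc0]; exact Real.sin_sq_add_cos_sq θ0
  have p1 : s1 ^ 2 + c1 ^ 2 = 1 := by rw [hs1, hc1]; exact Real.sin_sq_add_cos_sq θ1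
  set B : ℝ := s0 ^ 2 * c1 ^ 2 - (c0 - s0 * s1) ^ 2 with hB
  set C : ℝ := 2 * c0 * s0 * s1 with hC
  have hs0' : s0 ≠ 0 := fun h => hsc (by rw [h]; ring)
  have hc1' : c1 ≠ 0 := fun h => hsc (by rw [h]; ring)
  have hne' : (c0 - s0 * s1) ≠ 0 := sub_ne_zero.mpr hne
  have h1 : 1 - B - C = 2 * (c0 - s0 * s1) ^ 2 := by
    rw [hB, hC]; linear_combination -p0 - s0 ^ 2 * p1
  have h2 : 1 + B - C = 2 * s0 ^ 2 * c1 ^ 2 := by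
    rw [hB, hC]; linear_combination -p0 - s0 ^ 2 * p1
  have h1' : 1 - B - C > 0 := by rw [h1]; positivity
  have h2' : 1 + B - C > 0 := by rw [h2]; positivity
  have hc1sq : 0 < c1 ^ 2 := by positivity
  have key : C ^ 2 = (1 - (c0 ^ 2 - s0 ^ 2) ^ 2) * s1 ^ 2 := by
    rw [hC]; linear_combination (s1 ^ 2 * (s0 ^ 2 + c0 ^ 2 + 1)) * p0
  have hC2 : C ^ 2 < 1 := by
    nlinarith [key, mul_nonneg (sq_nonneg (c0 ^ 2 - s0 ^ 2)) (sq_nonneg s1), p1, hc1sq]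
  intro lam heq
  by_cases him : lam.im = 0
  · -- real root case
    have hlam : lam = ((lam.re : ℝ) : ℂ) := by
      apply Complex.ext <;> simp [him]
    set x : ℝ := lam.re with hx
    rw [hlam] at heq
    have hreal : x ^ 2 - B * x - C = 0 := by
      have h : (((x ^ 2 - B * x - C : ℝ)) : ℂ) = 0 := by push_cast; linear_combination heq
      exact_mod_cast h
    have habs : ‖lam‖ = |x| := by rw [hlam]; simp
    rw [habs]
    by_contra h
    push_neg at h
    have hx2 : 1 ≤ x ^ 2 := by nlinarith [h, abs_nonneg x, sq_abs x]
    set y : ℝ := B - x with hy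
    have hxy : x * y = -C := by rw [hy]; linear_combination -hreal
    have hsq : y ^ 2 * x ^ 2 = C ^ 2 := by linear_combination (x * y - C) * hxy
    have hy2 : y ^ 2 < 1 := by nlinarith [sq_nonneg y, hx2, hC2, hsq]
    have hf1 : (1 - x) * (1 - y) > 0 := by
      have e : (1 - x) * (1 - y) = 1 - B - C := by rw [hy]; linear_combination -hreal
      rw [e]; exact h1'
    have hf2 : (1 + x) * (1 + y) > 0 := by
      have e : (1 + x) * (1 + y) = 1 + B - C := by rw [hy]; linear_combination -hreal
      rw [e]; exact h2'
    have hyu : y < 1 := by nlinarith [sq_nonneg (y + 1), hy2]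
    have hyd : -1 < y := by nlinarith [sq_nonneg (y - 1), hy2]
    have hxlt : x < 1 := by nlinarith [hf1, hyu]
    have hxgt : -1 < x := by nlinarith [hf2, hyd]
    nlinarith [hx2]
  · -- non-real root: conjugate is also a root
    have hconj : (starRingEnd ℂ) lam ^ 2 - (B : ℂ) * (starRingEnd ℂ) lam - (C : ℂ) = 0 := by
      have h := congrArg (starRingEnd ℂ) heq
      simpa [map_sub, map_mul, map_pow, Complex.conj_ofReal] using h
    have hdiff : ((starRingEnd ℂ) lam - lam) * ((starRingEnd ℂ) lam + lam - (B : ℂ)) = 0 := by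
      linear_combination hconj - heq
    have hne2 : (starRingEnd ℂ) lam - lam ≠ 0 := by
      intro h
      have h' := sub_eq_zero.mp h
      apply him
      have h'' : ((starRingEnd ℂ) lam).im = lam.im := by rw [h']
      simp only [Complex.conj_im] at h''
      linarith
    have hsum : (starRingEnd ℂ) lam + lam = (B : ℂ) := by
      rcases mul_eq_zero.mp hdiff with h | h
      · exact absurd h hne2
      · linear_combination h
    have hprod : lam * (starRingEnd ℂ) lam = ((-C : ℝ) : ℂ) := by
      push_cast
      linear_combination lam * hsum - heq
    have hnormSq : (Complex.normSq lam : ℝ) = -C := by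
      have h := Complex.mul_conj lam
      rw [h] at hprod
      exact_mod_cast hprod
    have habs2 : ‖lam‖ ^ 2 = -C := by rw [Complex.sq_norm]; exact hnormSq
    by_contra hco
    push_neg at hco
    have h3 : (1 : ℝ) ≤ ‖lam‖ ^ 2 := by nlinarith [hco]
    nlinarith [habs2, hC2, h3, sq_nonneg (C + 1)]
end
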